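/- arXiv:1710.01831 — 6 statements merged into one kernel-verified Lean document; each statement's English description precedes it below -/
import Mathlib

section
/- Let f : ℝ × ℝ → ℝ be continuous, let t₀, x₀ ∈ ℝ and let c₀ = −1. Define the IFOHAM sequence u : ℕ → (ℝ → ℝ) by u₀(t) = x₀ and u_{m+1}(t) = c₀ · ∫_{t₀}^{t} [ (d/dξ) Σ_{k=0}^{m} u_k(ξ) − f(ξ, Σ_{k=0}^{m} u_k(ξ)) ] dξ for m ≥ 0 (so that each u_{m+1}(t₀) = 0), and define the Picard–Lindelöf iterates x : ℕ → (ℝ → ℝ) by x₀(t) = x₀ and x_{m+1}(t) = x₀ + ∫_{t₀}^{t} f(ξ, x_m(ξ)) dξ. Then for every m ∈ ℕ and every t ∈ ℝ, x_m(t) = Σ_{k=0}^{m} u_k(t); that is, the partial sums of the IFOHAM sequence with convergence control parameter c₀ = −1 coincide with the Picard–Lindelöf iterates. -/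
/-- Theorem 1: with convergence control parameter `c₀ = -1`, the partial sums of
the IFOHAM sequence coincide with the Picard–Lindelöf iterates. -/
theorem stmt_1 (f : ℝ → ℝ → ℝ) (hf : Continuous fun p : ℝ × ℝ => f p.1 p.2)
    (t₀ x₀ : ℝ) (c₀ : ℝ) (hc₀ : c₀ = -1)
    (u : ℕ → ℝ → ℝ)
    (hu0 : ∀ t, u 0 t = x₀)
    (hu : ∀ m t, u (m + 1) t =
      c₀ * ∫ ξ in t₀..t,
        (deriv (fun s => ∑ k ∈ Finset.range (m + 1), u k s) ξ
          - f ξ (∑ k ∈ Finset.range (m + 1), u k ξ)))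
    (x : ℕ → ℝ → ℝ)
    (hx0 : ∀ t, x 0 t = x₀)
    (hx : ∀ m t, x (m + 1) t = x₀ + ∫ ξ in t₀..t, f ξ (x m ξ)) :
    ∀ m t, x m t = ∑ k ∈ Finset.range (m + 1), u k t := by
  -- value at t₀
  have hxt₀ : ∀ m, x m t₀ = x₀ := by
    intro m
    cases m with
    | zero => exact hx0 t₀
    | succ n => simp [hx n t₀]
  -- main induction with smoothness
  suffices H : ∀ m, (∃ g : ℝ → ℝ, Continuous g ∧ ∀ t, HasDerivAt (x m) (g t) t) ∧
      ∀ t, x m t = ∑ k ∈ Finset.range (m + 1), u k t by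
    intro m; exact (H m).2
  intro m
  induction m with
  | zero =>
    constructor
    · refine ⟨fun _ => 0, continuous_const, fun t => ?_⟩
      have : x 0 = fun _ => x₀ := funext hx0
      rw [this]; exact hasDerivAt_const t x₀
    · intro t; simp [hx0 t, hu0 t]
  | succ m ih =>
    obtain ⟨⟨g, hg, hd⟩, heq⟩ := ih
    have hxm_cont : Continuous (x m) :=
      continuous_iff_continuousAt.2 fun t => (hd t).continuousAt
    set h : ℝ → ℝ := fun ξ => f ξ (x m ξ) with hh
    have hhc : Continuous h := hf.comp (continuous_id.prodMk hxm_cont)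
    have hxeq : x (m + 1) = fun t => x₀ + ∫ ξ in t₀..t, h ξ := funext (hx m)
    have hdnew : ∀ t, HasDerivAt (x (m + 1)) (h t) t := by
      intro t
      rw [hxeq]
      exact ((intervalIntegral.integral_hasDerivAt_right
        (hhc.intervalIntegrable t₀ t)
        hhc.aestronglyMeasurable.stronglyMeasurableAtFilter
        hhc.continuousAt).const_add x₀)
    refine ⟨⟨h, hhc, hdnew⟩, fun t => ?_⟩
    have hS : (fun s => ∑ k ∈ Finset.range (m + 1), u k s) = x m :=
      funext fun s => (heq s).symm
    have hderiv : ∀ ξ, deriv (fun s => ∑ k ∈ Finset.range (m + 1), u k s) ξ = g ξ := by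
      intro ξ; rw [hS]; exact (hd ξ).deriv
    have hint : (∫ ξ in t₀..t,
        (deriv (fun s => ∑ k ∈ Finset.range (m + 1), u k s) ξ
          - f ξ (∑ k ∈ Finset.range (m + 1), u k ξ)))
        = (∫ ξ in t₀..t, g ξ) - ∫ ξ in t₀..t, h ξ := by
      rw [← intervalIntegral.integral_sub (hg.intervalIntegrable t₀ t)
        (hhc.intervalIntegrable t₀ t)]
      apply intervalIntegral.integral_congr
      intro ξ _
      show deriv (fun s => ∑ k ∈ Finset.range (m + 1), u k s) ξ
          - f ξ (∑ k ∈ Finset.range (m + 1), u k ξ) = g ξ - h ξ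
      rw [hderiv ξ, ← heq ξ]
    have hftc : (∫ ξ in t₀..t, g ξ) = x m t - x m t₀ :=
      intervalIntegral.integral_eq_sub_of_hasDerivAt (fun ξ _ => hd ξ)
        (hg.intervalIntegrable t₀ t)
    rw [Finset.sum_range_succ, ← heq t, hu m t, hint, hftc, hxt₀ m, hc₀, hx m t]
    ring
end

section
/- Let f : ℝ × ℝ → ℝ be continuous, let (t₀, x₀) ∈ ℝ², let a, b > 0, and set R = {(t,x) : |t − t₀| ≤ a and |x − x₀| ≤ b}. Suppose f satisfies a Lipschitz condition with respect to the second variable on R with constant L, let M = max_{(t,x)∈R} |f(t,x)|, M > 0, and A = min{a, b/M}. Let x : I → ℝ be the unique solution of the initial value problem dx/dt = f(t,x), x(t₀) = x₀, on the open interval I = (t₀ − A, t₀ + A). Define the IFOHAM sequence u : ℕ → (ℝ → ℝ) with convergence control parameter c₀ = −1 by u₀(t) = x₀ and u_{m+1}(t) = c₀ · ∫_{t₀}^{t} [ (d/dξ) Σ_{k=0}^{m} u_k(ξ) − f(ξ, Σ_{k=0}^{m} u_k(ξ)) ] dξ. Then the sequence of partial sums ( Σ_{k=0}^{n} u_k )_{n∈ℕ}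 converges uniformly on I to the solution x. -/
open Set Filter MeasureTheory intervalIntegral

lemma contain_aux (t₀ x₀ M A b : ℝ) (hb : 0 < b) (hMA : M * A ≤ b) (hM0 : 0 < M)
    (x g : ℝ → ℝ) (hx0 : x t₀ = x₀)
    (hderiv : ∀ s ∈ Set.Ioo (t₀ - A) (t₀ + A), HasDerivAt x (g s) s)
    (hg : ∀ s ∈ Set.Ioo (t₀ - A) (t₀ + A), |x s - x₀| ≤ b → |g s| ≤ M)
    (t : ℝ) (ht : t ∈ Set.Ico t₀ (t₀ + A)) :
    |x t - x₀| ≤ M * (t - t₀) := by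
  obtain ⟨ht0, htA⟩ := ht
  have hA0 : 0 < A := by nlinarith
  have hsub : Icc t₀ t ⊆ Ioo (t₀ - A) (t₀ + A) := fun r hr =>
    ⟨by linarith [hr.1], lt_of_le_of_lt hr.2 htA⟩
  set s : Set ℝ := Icc t₀ t ∩ ((fun r => |x r - x₀| - M * (r - t₀)) ⁻¹' Iic 0) with hs_def
  have hxc : ContinuousOn x (Icc t₀ t) := fun r hr =>
    ((hderiv r (hsub hr)).continuousAt).continuousWithinAt
  have hF : ContinuousOn (fun r => |x r - x₀| - M * (r - t₀)) (Icc t₀ t) :=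
    ((hxc.sub continuousOn_const).abs).sub
      (continuous_const.mul (continuous_sub_right t₀)).continuousOn
  have hsc : IsClosed s := hF.preimage_isClosed_of_isClosed isClosed_Icc isClosed_Iic
  have hmain : Icc t₀ t ⊆ s := by
    apply IsClosed.Icc_subset_of_forall_mem_nhdsWithin
    · rwa [Set.inter_eq_left.mpr Set.inter_subset_left]
    · exact ⟨left_mem_Icc.mpr ht0, by simp [hx0]⟩
    · rintro r ⟨⟨hrIcc, hrle⟩, hrIco⟩
      have hrbd : |x r - x₀| ≤ M * (r - t₀) := by
        simp only [Set.mem_preimage, Set.mem_Iic] at hrle; linarith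
      have hrt : r < t := hrIco.2
      -- |x r - x₀| < b
      have hxb : |x r - x₀| < b := by
        have h1 : M * (r - t₀) ≤ M * (t - t₀) := by nlinarith [hrIcc.2]
        have h2 : M * (t - t₀) < M * A := by nlinarith
        linarith
      -- eventually |x r' - x₀| ≤ b near r
      have hev : ∀ᶠ r' in nhds r, |x r' - x₀| ≤ b := by
        have hc : ContinuousAt (fun r' => |x r' - x₀|) r :=
          ((hderiv r (hsub hrIcc)).continuousAt.sub continuousAt_const).abs
        have := hc.eventually_mem (Iio_mem_nhds hxb)
        exact this.mono fun r' hr' => le_of_lt hr'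
      obtain ⟨ε, hε, hball⟩ := Metric.eventually_nhds_iff.mp hev
      set δ := min (ε / 2) (t - r) with hδ_def
      have hδ0 : 0 < δ := lt_min (by linarith) (by linarith)
      refine mem_of_superset (Ioc_mem_nhdsGT_of_mem ⟨le_refl r, lt_add_of_pos_right r hδ0⟩) ?_
      rintro r' ⟨hr'1, hr'2⟩
      have hr'Icc : r' ∈ Icc t₀ t :=
        ⟨le_trans hrIcc.1 (le_of_lt hr'1), by
          have : δ ≤ t - r := min_le_right _ _; linarith⟩
      -- MVT on [r, r']
      have hMVT : ‖x r' - x r‖ ≤ M * (r' - r) := by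
        have hIccsub : Icc r r' ⊆ Icc t₀ t := fun z hz => ⟨le_trans hrIcc.1 hz.1, le_trans hz.2 hr'Icc.2⟩
        have hd : ∀ z ∈ Icc r r', HasDerivWithinAt x (g z) (Icc r r') z := fun z hz =>
          (hderiv z (hsub (hIccsub hz))).hasDerivWithinAt
        have hbd : ∀ z ∈ Ico r r', ‖g z‖ ≤ M := by
          intro z hz
          apply hg z (hsub (hIccsub (Ico_subset_Icc_self hz)))
          have hdist : dist z r < ε := by
            rw [Real.dist_eq, abs_of_nonneg (by linarith [hz.1] : (0:ℝ) ≤ z - r)]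
            have : δ ≤ ε / 2 := min_le_left _ _
            have := le_of_lt hz.2
            linarith
          exact hball hdist
        exact norm_image_sub_le_of_norm_deriv_le_segment' hd hbd r' (right_mem_Icc.mpr (le_of_lt hr'1))
      refine ⟨hr'Icc, ?_⟩
      simp only [Set.mem_preimage, Set.mem_Iic]
      have htri : |x r' - x₀| ≤ |x r' - x r| + |x r - x₀| := by
        have := abs_sub_abs_le_abs_sub (x r' - x₀) (x r - x₀)
        calc |x r' - x₀| = |(x r' - x r) + (x r - x₀)| := by ring_nf
          _ ≤ |x r' - x r| + |x r - x₀| := abs_add_le _ _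
      rw [Real.norm_eq_abs] at hMVT
      nlinarith
  have := hmain (right_mem_Icc.mpr ht0)
  obtain ⟨-, h2⟩ := this
  simp only [Set.mem_preimage, Set.mem_Iic] at h2
  linarith

/-- Theorem 2(c): under the Picard–Lindelöf hypotheses, the partial sums of the
IFOHAM sequence with convergence control parameter `c₀ = -1` converge uniformly
on `I = (t₀ - A, t₀ + A)` to the unique solution `x` of the IVP. -/
theorem stmt_2 (f : ℝ → ℝ → ℝ) (hf : Continuous fun p : ℝ × ℝ => f p.1 p.2)
    (t₀ x₀ a b L M A : ℝ) (ha : 0 < a) (hb : 0 < b)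
    (R : Set (ℝ × ℝ)) (hR : R = {p : ℝ × ℝ | |p.1 - t₀| ≤ a ∧ |p.2 - x₀| ≤ b})
    (hLip : ∀ t y z, (t, y) ∈ R → (t, z) ∈ R → |f t y - f t z| ≤ L * |y - z|)
    (hM : IsGreatest ((fun p : ℝ × ℝ => |f p.1 p.2|) '' R) M) (hM0 : 0 < M)
    (hA : A = min a (b / M))
    (x : ℝ → ℝ) (hx0 : x t₀ = x₀)
    (hxsol : ∀ t ∈ Set.Ioo (t₀ - A) (t₀ + A), HasDerivAt x (f t (x t)) t)
    (hxuniq : ∀ z : ℝ → ℝ, z t₀ = x₀ →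
      (∀ t ∈ Set.Ioo (t₀ - A) (t₀ + A), HasDerivAt z (f t (z t)) t) →
      ∀ t ∈ Set.Ioo (t₀ - A) (t₀ + A), z t = x t)
    (c₀ : ℝ) (hc₀ : c₀ = -1)
    (u : ℕ → ℝ → ℝ)
    (hu0 : ∀ t, u 0 t = x₀)
    (hu : ∀ m t, u (m + 1) t =
      c₀ * ∫ ξ in t₀..t,
        (deriv (fun s => ∑ k ∈ Finset.range (m + 1), u k s) ξ
          - f ξ (∑ k ∈ Finset.range (m + 1), u k ξ))) :
    TendstoUniformlyOn (fun n t => ∑ k ∈ Finset.range (n + 1), u k t) x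
      Filter.atTop (Set.Ioo (t₀ - A) (t₀ + A)) := by
  -- preliminaries
  have hA0 : 0 < A := by rw [hA]; exact lt_min ha (div_pos hb hM0)
  have hAa : A ≤ a := hA ▸ min_le_left a (b / M)
  have hAbM : A ≤ b / M := hA ▸ min_le_right a (b / M)
  have hMA : M * A ≤ b := by
    rw [mul_comm]; exact (le_div_iff₀ hM0).mp hAbM
  have hL0 : 0 ≤ L := by
    have h1 : (t₀, x₀) ∈ R := by
      rw [hR]; constructor <;> simp [abs_of_nonneg, le_of_lt ha, le_of_lt hb]
    have h2 : (t₀, x₀ + b) ∈ R := by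
      rw [hR]
      refine ⟨by simp [le_of_lt ha], ?_⟩
      simp [abs_of_nonneg (le_of_lt hb)]
    have h3 := hLip t₀ x₀ (x₀ + b) h1 h2
    have h4 : |x₀ - (x₀ + b)| = b := by
      rw [show x₀ - (x₀ + b) = -b by ring, abs_neg, abs_of_nonneg (le_of_lt hb)]
    rw [h4] at h3
    nlinarith [abs_nonneg (f t₀ x₀ - f t₀ (x₀ + b))]
  have hMabs : ∀ p : ℝ × ℝ, p ∈ R → |f p.1 p.2| ≤ M := fun p hp => hM.2 ⟨p, hp, rfl⟩
  have ht₀I : t₀ ∈ Set.Ioo (t₀ - A) (t₀ + A) := ⟨by linarith, by linarith⟩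
  have hmemR : ∀ ξ y : ℝ, ξ ∈ Set.Ioo (t₀ - A) (t₀ + A) → |y - x₀| ≤ b → (ξ, y) ∈ R := by
    intro ξ y hξ hy
    rw [hR]
    refine ⟨?_, hy⟩
    have : |ξ - t₀| < A := abs_sub_lt_iff.mpr ⟨by linarith [hξ.2], by linarith [hξ.1]⟩
    linarith
  have habsA : ∀ ξ ∈ Set.Ioo (t₀ - A) (t₀ + A), |ξ - t₀| < A := fun ξ hξ =>
    abs_sub_lt_iff.mpr ⟨by linarith [hξ.2], by linarith [hξ.1]⟩
  have huIccsub : ∀ t ∈ Set.Ioo (t₀ - A) (t₀ + A),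
      Set.uIcc t₀ t ⊆ Set.Ioo (t₀ - A) (t₀ + A) := fun t ht =>
    Set.ordConnected_Ioo.uIcc_subset ht₀I ht
  -- Step A : key structure of the partial sums
  have key : ∀ m : ℕ, ∃ d : ℝ → ℝ, Continuous d ∧
      (∀ t, HasDerivAt (fun s => ∑ k ∈ Finset.range (m + 1), u k s) (d t) t) ∧
      (∀ t, (∑ k ∈ Finset.range (m + 1), u k t) + u (m + 1) t
          = x₀ + ∫ ξ in t₀..t, f ξ (∑ k ∈ Finset.range (m + 1), u k ξ)) := by
    intro m
    induction m with
    | zero =>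
      have hS0 : (fun s : ℝ => ∑ k ∈ Finset.range (0 + 1), u k s) = fun _ => x₀ :=
        funext fun s => by simp [hu0]
      refine ⟨fun _ => 0, continuous_const, ?_, ?_⟩
      · intro t; rw [hS0]; exact hasDerivAt_const t x₀
      · intro t
        have hderiv0 : deriv (fun s : ℝ => ∑ k ∈ Finset.range (0 + 1), u k s)
            = fun _ => (0 : ℝ) := by rw [hS0]; exact deriv_const' x₀
        rw [hu 0 t, hderiv0]
        simp only [Finset.sum_range_succ, Finset.sum_range_zero, hu0, zero_add, hc₀,
          zero_sub, intervalIntegral.integral_neg, neg_mul, one_mul, neg_neg]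
    | succ m ih =>
      obtain ⟨d, hdc, hdd, hform⟩ := ih
      have hSmc : Continuous (fun t => ∑ k ∈ Finset.range (m + 1), u k t) :=
        continuous_iff_continuousAt.mpr fun t => (hdd t).continuousAt
      have hfSm : Continuous (fun t => f t (∑ k ∈ Finset.range (m + 1), u k t)) :=
        hf.comp (continuous_id.prodMk hSmc)
      have hfun : (fun s => ∑ k ∈ Finset.range (m + 1 + 1), u k s)
          = fun s => x₀ + ∫ ξ in t₀..s, f ξ (∑ k ∈ Finset.range (m + 1), u k ξ) :=
        funext fun s => by rw [Finset.sum_range_succ]; exact hform s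
      have hdd1 : ∀ t, HasDerivAt (fun s => ∑ k ∈ Finset.range (m + 1 + 1), u k s)
          (f t (∑ k ∈ Finset.range (m + 1), u k t)) t := by
        intro t
        rw [hfun]
        exact ((hfSm.integral_hasStrictDerivAt t₀ t).hasDerivAt).const_add x₀
      have hSm1c : Continuous (fun t => ∑ k ∈ Finset.range (m + 1 + 1), u k t) :=
        continuous_iff_continuousAt.mpr fun t => (hdd1 t).continuousAt
      refine ⟨fun t => f t (∑ k ∈ Finset.range (m + 1), u k t), hfSm, hdd1, ?_⟩
      intro t
      have hSt₀ : (∑ k ∈ Finset.range (m + 1 + 1), u k t₀) = x₀ := by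
        rw [Finset.sum_range_succ, hform t₀, intervalIntegral.integral_same, add_zero]
      rw [hu (m + 1) t]
      have hderiv_eq : deriv (fun s => ∑ k ∈ Finset.range (m + 1 + 1), u k s)
          = fun t => f t (∑ k ∈ Finset.range (m + 1), u k t) :=
        funext fun ξ => (hdd1 ξ).deriv
      rw [hderiv_eq]
      have hdint : IntervalIntegrable (fun ξ => f ξ (∑ k ∈ Finset.range (m + 1), u k ξ))
          volume t₀ t := hfSm.intervalIntegrable t₀ t
      have hGint : IntervalIntegrable (fun ξ => f ξ (∑ k ∈ Finset.range (m + 1 + 1), u k ξ))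
          volume t₀ t := (hf.comp (continuous_id.prodMk hSm1c)).intervalIntegrable t₀ t
      rw [intervalIntegral.integral_sub hdint hGint]
      have hFTC2 : (∫ ξ in t₀..t, f ξ (∑ k ∈ Finset.range (m + 1), u k ξ))
          = (∑ k ∈ Finset.range (m + 1 + 1), u k t) - x₀ := by
        rw [intervalIntegral.integral_eq_sub_of_hasDerivAt (fun ξ _ => hdd1 ξ) hdint, hSt₀]
      rw [hFTC2, hc₀]
      ring
  have hScont : ∀ m, Continuous (fun t => ∑ k ∈ Finset.range (m + 1), u k t) := by
    intro m
    obtain ⟨d, _, hdd, _⟩ := key m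
    exact continuous_iff_continuousAt.mpr fun t => (hdd t).continuousAt
  have hSform : ∀ m t, (∑ k ∈ Finset.range (m + 1 + 1), u k t)
      = x₀ + ∫ ξ in t₀..t, f ξ (∑ k ∈ Finset.range (m + 1), u k ξ) := by
    intro m t
    obtain ⟨d, _, _, hform⟩ := key m
    rw [Finset.sum_range_succ]; exact hform t
  -- Step B : the partial sums stay in the rectangle
  have hSbound : ∀ m, ∀ t ∈ Set.Ioo (t₀ - A) (t₀ + A),
      |(∑ k ∈ Finset.range (m + 1), u k t) - x₀| ≤ M * |t - t₀| := by
    intro m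
    induction m with
    | zero =>
      intro t ht
      simp only [Finset.sum_range_succ, Finset.sum_range_zero, hu0, zero_add, sub_self, abs_zero]
      positivity
    | succ m ih =>
      intro t ht
      rw [hSform m t]
      rw [show x₀ + (∫ ξ in t₀..t, f ξ (∑ k ∈ Finset.range (m + 1), u k ξ)) - x₀
          = ∫ ξ in t₀..t, f ξ (∑ k ∈ Finset.range (m + 1), u k ξ) by ring]
      rw [show |∫ ξ in t₀..t, f ξ (∑ k ∈ Finset.range (m + 1), u k ξ)|
          = ‖∫ ξ in t₀..t, f ξ (∑ k ∈ Finset.range (m + 1), u k ξ)‖ from rfl]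
      rw [show M * |t - t₀| = M * |t - t₀| from rfl]
      apply intervalIntegral.norm_integral_le_of_norm_le_const
      intro ξ hξ
      have hξI : ξ ∈ Set.Ioo (t₀ - A) (t₀ + A) :=
        huIccsub t ht (Set.uIoc_subset_uIcc hξ)
      rw [Real.norm_eq_abs]
      apply hMabs (ξ, ∑ k ∈ Finset.range (m + 1), u k ξ)
      apply hmemR _ _ hξI
      have h1 := ih ξ hξI
      have h2 := habsA ξ hξI
      nlinarith [abs_nonneg (ξ - t₀)]
  -- Step C : the solution stays in the rectangle
  have hxbound : ∀ t ∈ Set.Ioo (t₀ - A) (t₀ + A), |x t - x₀| ≤ M * |t - t₀| := by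
    intro t ht
    rcases le_total t₀ t with h | h
    · rw [abs_of_nonneg (by linarith : (0:ℝ) ≤ t - t₀)]
      exact contain_aux t₀ x₀ M A b hb hMA hM0 x (fun s => f s (x s)) hx0 hxsol
        (fun s hs hsb => hMabs (s, x s) (hmemR s (x s) hs hsb)) t ⟨h, ht.2⟩
    · rw [abs_of_nonpos (by linarith : t - t₀ ≤ 0)]
      have hrefl := contain_aux t₀ x₀ M A b hb hMA hM0
        (fun s => x (2 * t₀ - s)) (fun s => -f (2 * t₀ - s) (x (2 * t₀ - s)))
        (by show x (2 * t₀ - t₀) = x₀; rw [show 2 * t₀ - t₀ = t₀ by ring]; exact hx0)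
        (by
          intro s hs
          have hs' : 2 * t₀ - s ∈ Set.Ioo (t₀ - A) (t₀ + A) :=
            ⟨by linarith [hs.2], by linarith [hs.1]⟩
          have h1 : HasDerivAt (fun s : ℝ => 2 * t₀ - s) (-1) s :=
            (hasDerivAt_id s).const_sub (2 * t₀)
          have h2 := (hxsol (2 * t₀ - s) hs').comp s h1
          simpa [mul_comm, Function.comp_def] using h2)
        (by
          intro s hs hsb
          have hs' : 2 * t₀ - s ∈ Set.Ioo (t₀ - A) (t₀ + A) :=
            ⟨by linarith [hs.2], by linarith [hs.1]⟩
          rw [abs_neg]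
          exact hMabs (2 * t₀ - s, x (2 * t₀ - s)) (hmemR _ _ hs' hsb))
        (2 * t₀ - t) ⟨by linarith, by linarith [ht.1]⟩
      have h2 : 2 * t₀ - (2 * t₀ - t) = t := by ring
      simp only [h2] at hrefl
      have h3 : M * (2 * t₀ - t - t₀) = M * -(t - t₀) := by ring
      linarith
  -- Step D : integral form of the solution
  have hxint : ∀ t ∈ Set.Ioo (t₀ - A) (t₀ + A),
      (∫ ξ in t₀..t, f ξ (x ξ)) = x t - x₀ := by
    intro t ht
    have hcont : ContinuousOn (fun ξ => f ξ (x ξ)) (Set.uIcc t₀ t) := by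
      exact hf.comp_continuousOn (continuousOn_id.prodMk fun ξ hξ =>
        (hxsol ξ (huIccsub t ht hξ)).continuousAt.continuousWithinAt)
    rw [intervalIntegral.integral_eq_sub_of_hasDerivAt
      (fun ξ hξ => hxsol ξ (huIccsub t ht hξ)) (hcont.intervalIntegrable), hx0]
  -- Step E : the factorial error bound
  have hE : ∀ m, ∀ t ∈ Set.Ioo (t₀ - A) (t₀ + A),
      |(∑ k ∈ Finset.range (m + 1), u k t) - x t|
        ≤ b * (L * |t - t₀|) ^ m / (Nat.factorial m : ℝ) := by
    intro m
    induction m with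
    | zero =>
      intro t ht
      simp only [Finset.sum_range_succ, Finset.sum_range_zero, hu0, zero_add, pow_zero,
        Nat.factorial_zero, Nat.cast_one, mul_one, div_one]
      have h1 := hxbound t ht
      have h2 := habsA t ht
      rw [abs_sub_comm]
      nlinarith
    | succ m ih =>
      intro t ht
      have hintx : IntervalIntegrable (fun ξ => f ξ (x ξ)) volume t₀ t := by
        apply ContinuousOn.intervalIntegrable
        exact hf.comp_continuousOn (continuousOn_id.prodMk fun ξ hξ =>
          (hxsol ξ (huIccsub t ht hξ)).continuousAt.continuousWithinAt)
      have hintS : IntervalIntegrable (fun ξ => f ξ (∑ k ∈ Finset.range (m + 1), u k ξ))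
          volume t₀ t :=
        (hf.comp (continuous_id.prodMk (hScont m))).intervalIntegrable t₀ t
      have hxt : x t = x₀ + ∫ ξ in t₀..t, f ξ (x ξ) := by rw [hxint t ht]; ring
      rw [hSform m t, hxt]
      rw [show x₀ + (∫ ξ in t₀..t, f ξ (∑ k ∈ Finset.range (m + 1), u k ξ))
          - (x₀ + ∫ ξ in t₀..t, f ξ (x ξ))
          = (∫ ξ in t₀..t, f ξ (∑ k ∈ Finset.range (m + 1), u k ξ))
            - ∫ ξ in t₀..t, f ξ (x ξ) by ring]
      rw [← intervalIntegral.integral_sub hintS hintx]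
      set C : ℝ := L ^ (m + 1) * b / (Nat.factorial m : ℝ) with hC_def
      have hC0 : 0 ≤ C := by positivity
      calc |∫ ξ in t₀..t, (f ξ (∑ k ∈ Finset.range (m + 1), u k ξ) - f ξ (x ξ))|
          = ‖∫ ξ in t₀..t, (f ξ (∑ k ∈ Finset.range (m + 1), u k ξ) - f ξ (x ξ))‖ :=
            (Real.norm_eq_abs _).symm
        _ ≤ ∫ ξ in Set.uIoc t₀ t, ‖f ξ (∑ k ∈ Finset.range (m + 1), u k ξ) - f ξ (x ξ)‖ :=
            intervalIntegral.norm_integral_le_integral_norm_uIoc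
        _ ≤ ∫ ξ in Set.uIoc t₀ t, C * |ξ - t₀| ^ m := by
            apply MeasureTheory.setIntegral_mono_on
            · apply MeasureTheory.IntegrableOn.mono_set _ Set.uIoc_subset_uIcc
              apply (ContinuousOn.norm ?_).integrableOn_compact isCompact_uIcc
              apply ContinuousOn.sub
              · exact (hf.comp (continuous_id.prodMk (hScont m))).continuousOn
              · exact hf.comp_continuousOn (continuousOn_id.prodMk fun ξ hξ =>
                  (hxsol ξ (huIccsub t ht hξ)).continuousAt.continuousWithinAt)
            · apply MeasureTheory.IntegrableOn.mono_set _ Set.uIoc_subset_uIcc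
              apply ContinuousOn.integrableOn_compact isCompact_uIcc
              exact (continuous_const.mul ((continuous_sub_right t₀).abs.pow m)).continuousOn
            · exact measurableSet_uIoc
            · intro ξ hξ
              have hξI : ξ ∈ Set.Ioo (t₀ - A) (t₀ + A) :=
                huIccsub t ht (Set.uIoc_subset_uIcc hξ)
              have hSb : |(∑ k ∈ Finset.range (m + 1), u k ξ) - x₀| ≤ b := by
                have h1 := hSbound m ξ hξI
                have h2 := habsA ξ hξI
                nlinarith [abs_nonneg (ξ - t₀)]
              have hxb : |x ξ - x₀| ≤ b := by
                have h1 := hxbound ξ hξI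
                have h2 := habsA ξ hξI
                nlinarith [abs_nonneg (ξ - t₀)]
              have hlip := hLip ξ (∑ k ∈ Finset.range (m + 1), u k ξ) (x ξ)
                (hmemR _ _ hξI hSb) (hmemR _ _ hξI hxb)
              have hih := ih ξ hξI
              rw [Real.norm_eq_abs]
              calc |f ξ (∑ k ∈ Finset.range (m + 1), u k ξ) - f ξ (x ξ)|
                  ≤ L * |(∑ k ∈ Finset.range (m + 1), u k ξ) - x ξ| := hlip
                _ ≤ L * (b * (L * |ξ - t₀|) ^ m / (Nat.factorial m : ℝ)) := by
                    exact mul_le_mul_of_nonneg_left hih hL0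
                _ = C * |ξ - t₀| ^ m := by
                    rw [hC_def, mul_pow]; ring
        _ = C * (|t - t₀| ^ (m + 1) / (m + 1)) := by
            rw [MeasureTheory.integral_const_mul, integral_pow_abs_sub_uIoc]
        _ = b * (L * |t - t₀|) ^ (m + 1) / (Nat.factorial (m + 1) : ℝ) := by
            rw [hC_def, mul_pow]
            rw [show ((Nat.factorial (m + 1) : ℝ)) = (m + 1) * (Nat.factorial m : ℝ) by
              rw [Nat.factorial_succ]; push_cast; ring]
            have hm : (Nat.factorial m : ℝ) ≠ 0 := by positivity
            field_simp
  -- Step F : conclusion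
  rw [Metric.tendstoUniformlyOn_iff]
  intro ε hε
  have hconv : Tendsto (fun n : ℕ => b * (L * A) ^ n / (Nat.factorial n : ℝ))
      atTop (nhds 0) := by
    have h1 := FloorSemiring.tendsto_pow_div_factorial_atTop (K := ℝ) (L * A)
    have h2 := h1.const_mul b
    simpa [mul_div_assoc] using h2
  filter_upwards [hconv.eventually (gt_mem_nhds hε)] with n hn
  intro t ht
  have h1 := hE n t ht
  have h2 : b * (L * |t - t₀|) ^ n / (Nat.factorial n : ℝ)
      ≤ b * (L * A) ^ n / (Nat.factorial n : ℝ) := by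
    gcongr <;>
      first
        | positivity
        | exact hL0
        | exact le_of_lt hb
        | exact le_of_lt (habsA t ht)
  rw [Real.dist_eq, abs_sub_comm]
  calc |(∑ k ∈ Finset.range (n + 1), u k t) - x t|
      ≤ b * (L * |t - t₀|) ^ n / (Nat.factorial n : ℝ) := h1
    _ ≤ b * (L * A) ^ n / (Nat.factorial n : ℝ) := h2
    _ < ε := hn
end

section
/- Let f : ℝ × ℝ → ℝ be continuous, let (t₀, x₀) ∈ ℝ², let a, b > 0, set R = {(t,x) : |t − t₀| ≤ a, |x − x₀| ≤ b}, suppose f is Lipschitz in the second variable on R with constant L, let M = max_{R} |f| with M > 0, and A = min{a, b/M}. Let x : I → ℝ be the unique solution of dx/dt = f(t,x), x(t₀) = x₀, on I = (t₀ − A, t₀ + A). Let c₀ ∈ [−1, 0) and define the IFOHAM sequence u : ℕ → (ℝ → ℝ) by u₀(t) = x₀ and u_{m+1}(t) = c₀ · ∫_{t₀}^{t} [ (d/dξ) Σ_{k=0}^{m} u_k(ξ) − f(ξ, Σ_{k=0}^{m} u_k(ξ)) ] dξ. Then the sequence of partial sums ( Σ_{k=0}^{n} u_k )_{n∈ℕ}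 converges uniformly on I to the solution x. -/
open intervalIntegral Real Set

noncomputable def ifoS (u : ℕ → ℝ → ℝ) (m : ℕ) (t : ℝ) : ℝ := ∑ k ∈ Finset.range (m + 1), u k t

noncomputable def ifoD (f : ℝ → ℝ → ℝ) (c₀ : ℝ) (u : ℕ → ℝ → ℝ) : ℕ → ℝ → ℝ
  | 0 => fun _ => 0
  | (m + 1) => fun t => ifoD f c₀ u m t + c₀ * (ifoD f c₀ u m t - f t (ifoS u m t))

lemma my_ftc {h : ℝ → ℝ} (hc : Continuous h) (t₀ t : ℝ) :
    HasDerivAt (fun s => ∫ ξ in t₀..s, h ξ) (h t) t :=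
  integral_hasDerivAt_right (hc.intervalIntegrable t₀ t)
    (hc.aestronglyMeasurable.stronglyMeasurableAtFilter) hc.continuousAt

lemma my_exp_int {K : ℝ} (hK : 0 < K) {t₀ t : ℝ} (h : t₀ ≤ t) :
    ∫ ξ in t₀..t, Real.exp (K * (ξ - t₀)) = (Real.exp (K * (t - t₀)) - 1) / K := by
  have hd : ∀ ξ : ℝ, HasDerivAt (fun s => Real.exp (K * (s - t₀)) / K)
      (Real.exp (K * (ξ - t₀))) ξ := by
    intro ξ
    have h1 : HasDerivAt (fun s : ℝ => K * (s - t₀)) K ξ :=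
      ((hasDerivAt_id ξ).sub_const t₀).const_mul K |>.congr_deriv (by ring)
    have := (h1.exp).div_const K
    simpa [mul_div_assoc, mul_comm, mul_div_cancel_right₀, ne_of_gt hK] using this
  have := integral_eq_sub_of_hasDerivAt (fun ξ _ => hd ξ)
    (((Real.continuous_exp.comp (by continuity)).intervalIntegrable t₀ t))
  rw [this]
  field_simp
  simp

lemma my_exp_int' {K : ℝ} (hK : 0 < K) {t₀ t : ℝ} (h : t ≤ t₀) :
    ∫ ξ in t..t₀, Real.exp (K * (t₀ - ξ)) = (Real.exp (K * (t₀ - t)) - 1) / K := by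
  have hd : ∀ ξ : ℝ, HasDerivAt (fun s => -(Real.exp (K * (t₀ - s)) / K))
      (Real.exp (K * (t₀ - ξ))) ξ := by
    intro ξ
    have h1 : HasDerivAt (fun s : ℝ => K * (t₀ - s)) (-K) ξ :=
      ((hasDerivAt_id ξ).const_sub t₀).const_mul K |>.congr_deriv (by ring)
    have := ((h1.exp).div_const K).neg
    simpa [mul_div_assoc, mul_comm, mul_div_cancel_right₀, ne_of_gt hK, neg_div, neg_neg, Pi.neg_def]
      using this
  have := integral_eq_sub_of_hasDerivAt (fun ξ _ => hd ξ)
    (((Real.continuous_exp.comp (by continuity)).intervalIntegrable t t₀))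
  rw [this]
  field_simp
  simp
  ring

lemma my_gronwall {φ φ' : ℝ → ℝ} {t₀ t K ε : ℝ} (ht : t₀ ≤ t)
    (hd : ∀ s ∈ Set.Icc t₀ t, HasDerivAt φ (φ' s) s) (h0 : φ t₀ = 0)
    (hb : ∀ s ∈ Set.Icc t₀ t, |φ' s| ≤ K * |φ s| + ε) :
    |φ t| ≤ gronwallBound 0 K ε (t - t₀) := by
  have := norm_le_gronwallBound_of_norm_deriv_right_le (f := φ) (f' := φ') (a := t₀) (b := t)
    (δ := 0) (K := K) (ε := ε)
    (fun s hs => (hd s hs).continuousAt.continuousWithinAt)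
    (fun s hs => ((hd s (Set.mem_Icc.2 ⟨hs.1, hs.2.le⟩)).hasDerivWithinAt))
    (by simp [h0]) (fun s hs => hb s (Set.mem_Icc.2 ⟨hs.1, hs.2.le⟩)) t
    (Set.mem_Icc.2 ⟨ht, le_rfl⟩)
  simpa [Real.norm_eq_abs] using this

lemma gronwallBound_le {K ε d A : ℝ} (hK : 1 ≤ K) (hε : 0 ≤ ε) (hd : 0 ≤ d) (hdA : d ≤ A) :
    gronwallBound 0 K ε d ≤ ε * Real.exp (K * A) := by
  rw [gronwallBound_of_K_ne_0 (by linarith)]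
  have h1 : Real.exp (K * d) - 1 ≤ Real.exp (K * A) := by
    have := Real.exp_le_exp.2 (mul_le_mul_of_nonneg_left hdA (by linarith : (0:ℝ) ≤ K))
    linarith
  have h2 : ε / K ≤ ε := by
    rw [div_le_iff₀ (by linarith)]
    nlinarith
  calc 0 * Real.exp (K * d) + ε / K * (Real.exp (K * d) - 1)
      ≤ 0 + ε * Real.exp (K * A) := by
        refine add_le_add (by simp) ?_
        have hx : 0 ≤ Real.exp (K * d) - 1 := by
          have := Real.one_le_exp (by positivity : 0 ≤ K * d); linarith
        calc ε / K * (Real.exp (K * d) - 1) ≤ ε * (Real.exp (K * d) - 1) :=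
              mul_le_mul_of_nonneg_right h2 hx
          _ ≤ ε * Real.exp (K * A) := mul_le_mul_of_nonneg_left h1 hε
    _ = ε * Real.exp (K * A) := by ring

open scoped NNReal in
lemma my_sol_exists {f : ℝ → ℝ → ℝ} (hf : Continuous fun p : ℝ × ℝ => f p.1 p.2)
    {t₀ x₀ a b L M A : ℝ} (hb : 0 < b) (hM0 : 0 < M) (hL0 : 0 ≤ L)
    (hA0 : 0 < A) (hAa : A ≤ a) (hMA : M * A ≤ b)
    (hLip : ∀ t y z, |t - t₀| ≤ a → |y - x₀| ≤ b → |z - x₀| ≤ b →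
      |f t y - f t z| ≤ L * |y - z|)
    (hMb : ∀ t y, |t - t₀| ≤ a → |y - x₀| ≤ b → |f t y| ≤ M) :
    ∃ z : ℝ → ℝ, z t₀ = x₀ ∧
      (∀ t ∈ Set.Ioo (t₀ - A) (t₀ + A), HasDerivAt z (f t (z t)) t) ∧
      (∀ t ∈ Set.Icc (t₀ - A) (t₀ + A), |z t - x₀| ≤ b) := by
  have habs : ∀ t : ℝ, t ∈ Set.Icc (t₀ - A) (t₀ + A) → |t - t₀| ≤ a := by
    intro t ht
    rw [abs_sub_le_iff]
    constructor <;> [skip; skip] <;> (simp only [Set.mem_Icc] at ht; linarith)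
  have ht₀m : t₀ ∈ Set.Icc (t₀ - A) (t₀ + A) := ⟨by linarith, by linarith⟩
  have hpl : IsPicardLindelof f (⟨t₀, ht₀m⟩ : Set.Icc (t₀ - A) (t₀ + A)) x₀ b.toNNReal 0
      M.toNNReal L.toNNReal := by
    constructor
    · intro t ht
      apply LipschitzOnWith.of_dist_le_mul
      intro y hy z hz
      rw [Real.dist_eq, Real.dist_eq, Real.coe_toNNReal L hL0]
      exact hLip t y z (habs t ht) (by simpa [Real.dist_eq, hb.le] using hy)
        (by simpa [Real.dist_eq, hb.le] using hz)
    · intro y _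
      exact (hf.comp (continuous_id.prodMk continuous_const)).continuousOn
    · intro t ht y hy
      rw [Real.norm_eq_abs, Real.coe_toNNReal M hM0.le]
      exact hMb t y (habs t ht) (by simpa [Real.dist_eq, hb.le] using hy)
    · have hmax : max (t₀ + A - t₀) (t₀ - (t₀ - A)) = A := by
        rw [show t₀ + A - t₀ = A by ring, show t₀ - (t₀ - A) = A by ring, max_self]
      simp only [Real.coe_toNNReal _ hM0.le, Real.coe_toNNReal _ hb.le, NNReal.coe_zero,
        sub_zero, tsub_zero, hmax]
      exact hMA
  obtain ⟨α, hα⟩ := ODE.FunSpace.exists_isFixedPt_next hpl (x := x₀)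
    (Metric.mem_closedBall_self le_rfl)
  refine ⟨α.compProj, ?_, ?_, ?_⟩
  · show α.compProj ((⟨t₀, ht₀m⟩ : Set.Icc (t₀ - A) (t₀ + A)) : ℝ) = x₀
    rw [ODE.FunSpace.compProj_val, ← hα, ODE.FunSpace.next_apply₀]
  · intro t ht
    have htIcc : t ∈ Set.Icc (t₀ - A) (t₀ + A) := Set.mem_Icc.2 ⟨ht.1.le, ht.2.le⟩
    have hder : HasDerivWithinAt α.compProj (f t (α.compProj t)) (Set.Icc (t₀ - A) (t₀ + A)) t := by
      apply ODE.hasDerivWithinAt_picard_Icc ht₀m hpl.continuousOn_uncurry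
        α.continuous_compProj.continuousOn
        (fun _ ht' ↦ α.compProj_mem_closedBall hpl.mul_max_le)
        x₀ htIcc |>.congr_of_mem _ htIcc
      intro t' ht'
      nth_rw 1 [← hα]
      rw [ODE.FunSpace.compProj_of_mem ht', ODE.FunSpace.next_apply]
    exact hder.hasDerivAt (Icc_mem_nhds ht.1 ht.2)
  · intro t ht
    have h1 := α.compProj_mem_closedBall hpl.mul_max_le (t := t)
    simpa [Metric.mem_closedBall, Real.dist_eq, hb.le] using h1

lemma my_int_bound {G : ℝ → ℝ} (hG : Continuous G) {t₀ t A K c : ℝ} (hK : 0 < K) (hc : 0 ≤ c)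
    (ht : |t - t₀| ≤ A)
    (hball : ∀ ξ, |ξ - t₀| ≤ A → |G ξ| ≤ c * Real.exp (K * |ξ - t₀|)) :
    |∫ ξ in t₀..t, G ξ| ≤ c * Real.exp (K * |t - t₀|) / K := by
  rcases le_total t₀ t with h | h
  · have habs : ∀ ξ ∈ Set.Icc t₀ t, |G ξ| ≤ c * Real.exp (K * (ξ - t₀)) := by
      intro ξ hξ
      have h1 : |ξ - t₀| ≤ |t - t₀| := by
        rw [abs_of_nonneg (by linarith [hξ.1] : (0:ℝ) ≤ ξ - t₀),
          abs_of_nonneg (by linarith : (0:ℝ) ≤ t - t₀)]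
        linarith [hξ.2]
      have h2 := hball ξ (h1.trans ht)
      rwa [abs_of_nonneg (by linarith [hξ.1] : (0:ℝ) ≤ ξ - t₀)] at h2
    calc |∫ ξ in t₀..t, G ξ| ≤ ∫ ξ in t₀..t, |G ξ| :=
          intervalIntegral.abs_integral_le_integral_abs h
      _ ≤ ∫ ξ in t₀..t, c * Real.exp (K * (ξ - t₀)) :=
          intervalIntegral.integral_mono_on h (hG.abs.intervalIntegrable _ _)
            ((by continuity : Continuous fun ξ => c * Real.exp (K * (ξ - t₀))).intervalIntegrable
              _ _) habs
      _ = c * ((Real.exp (K * (t - t₀)) - 1) / K) := by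
          rw [intervalIntegral.integral_const_mul, my_exp_int hK h]
      _ ≤ c * Real.exp (K * |t - t₀|) / K := by
          rw [abs_of_nonneg (by linarith : (0:ℝ) ≤ t - t₀), mul_div_assoc]
          refine mul_le_mul_of_nonneg_left ?_ hc
          apply div_le_div_of_nonneg_right ?_ hK.le
          linarith [Real.exp_pos (K * (t - t₀))]
  · have habs : ∀ ξ ∈ Set.Icc t t₀, |G ξ| ≤ c * Real.exp (K * (t₀ - ξ)) := by
      intro ξ hξ
      have h1 : |ξ - t₀| ≤ |t - t₀| := by
        rw [abs_of_nonpos (by linarith [hξ.2] : ξ - t₀ ≤ 0),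
          abs_of_nonpos (by linarith : t - t₀ ≤ 0)]
        linarith [hξ.1]
      have h2 := hball ξ (h1.trans ht)
      rwa [abs_of_nonpos (by linarith [hξ.2] : ξ - t₀ ≤ 0), neg_sub] at h2
    rw [intervalIntegral.integral_symm, abs_neg]
    calc |∫ ξ in t..t₀, G ξ| ≤ ∫ ξ in t..t₀, |G ξ| :=
          intervalIntegral.abs_integral_le_integral_abs h
      _ ≤ ∫ ξ in t..t₀, c * Real.exp (K * (t₀ - ξ)) :=
          intervalIntegral.integral_mono_on h (hG.abs.intervalIntegrable _ _)
            ((by continuity : Continuous fun ξ => c * Real.exp (K * (t₀ - ξ))).intervalIntegrable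
              _ _) habs
      _ = c * ((Real.exp (K * (t₀ - t)) - 1) / K) := by
          rw [intervalIntegral.integral_const_mul, my_exp_int' hK h]
      _ ≤ c * Real.exp (K * |t - t₀|) / K := by
          rw [abs_of_nonpos (by linarith : t - t₀ ≤ 0), neg_sub, mul_div_assoc]
          refine mul_le_mul_of_nonneg_left ?_ hc
          apply div_le_div_of_nonneg_right ?_ hK.le
          linarith [Real.exp_pos (K * (t₀ - t))]

lemma my_uIoc_abs {t₀ t ξ : ℝ} (hξ : ξ ∈ Set.uIoc t₀ t) : |ξ - t₀| ≤ |t - t₀| := by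
  rcases le_total t₀ t with h | h
  · rw [Set.uIoc_of_le h] at hξ
    rw [abs_of_nonneg (by linarith [hξ.1.le] : (0:ℝ) ≤ ξ - t₀),
      abs_of_nonneg (by linarith : (0:ℝ) ≤ t - t₀)]
    linarith [hξ.2]
  · rw [Set.uIoc_of_ge h] at hξ
    rw [abs_of_nonpos (by linarith [hξ.2] : ξ - t₀ ≤ 0),
      abs_of_nonpos (by linarith : t - t₀ ≤ 0)]
    linarith [hξ.1.le]

set_option maxHeartbeats 1000000 in
/-- Proposition 5 (part 1): under the Picard–Lindelöf hypotheses and for any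
convergence control parameter `c₀ ∈ [-1, 0)`, the partial sums of the IFOHAM
sequence converge uniformly on `I = (t₀ - A, t₀ + A)` to the unique solution. -/
theorem stmt_5 (f : ℝ → ℝ → ℝ) (hf : Continuous fun p : ℝ × ℝ => f p.1 p.2)
    (t₀ x₀ a b L M A : ℝ) (ha : 0 < a) (hb : 0 < b)
    (R : Set (ℝ × ℝ)) (hR : R = {p : ℝ × ℝ | |p.1 - t₀| ≤ a ∧ |p.2 - x₀| ≤ b})
    (hLip : ∀ t y z, (t, y) ∈ R → (t, z) ∈ R → |f t y - f t z| ≤ L * |y - z|)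
    (hM : IsGreatest ((fun p : ℝ × ℝ => |f p.1 p.2|) '' R) M) (hM0 : 0 < M)
    (hA : A = min a (b / M))
    (x : ℝ → ℝ) (hx0 : x t₀ = x₀)
    (hxsol : ∀ t ∈ Set.Ioo (t₀ - A) (t₀ + A), HasDerivAt x (f t (x t)) t)
    (hxuniq : ∀ z : ℝ → ℝ, z t₀ = x₀ →
      (∀ t ∈ Set.Ioo (t₀ - A) (t₀ + A), HasDerivAt z (f t (z t)) t) →
      ∀ t ∈ Set.Ioo (t₀ - A) (t₀ + A), z t = x t)
    (c₀ : ℝ) (hc₀ : c₀ ∈ Set.Ico (-1 : ℝ) 0)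
    (u : ℕ → ℝ → ℝ)
    (hu0 : ∀ t, u 0 t = x₀)
    (hu : ∀ m t, u (m + 1) t =
      c₀ * ∫ ξ in t₀..t,
        (deriv (fun s => ∑ k ∈ Finset.range (m + 1), u k s) ξ
          - f ξ (∑ k ∈ Finset.range (m + 1), u k ξ))) :
    TendstoUniformlyOn (fun n t => ∑ k ∈ Finset.range (n + 1), u k t) x
      Filter.atTop (Set.Ioo (t₀ - A) (t₀ + A)) := by
  obtain ⟨hc₁, hc₂⟩ := hc₀
  -- basic constants
  have hA0 : 0 < A := by rw [hA]; exact lt_min ha (div_pos hb hM0)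
  have hAa : A ≤ a := hA ▸ min_le_left _ _
  have hMA : M * A ≤ b := by
    rw [hA]
    calc M * min a (b / M) ≤ M * (b / M) :=
          mul_le_mul_of_nonneg_left (min_le_right _ _) hM0.le
      _ = b := by field_simp
  -- Lipschitz / bound in convenient form
  have hmemR : ∀ t y : ℝ, |t - t₀| ≤ a → |y - x₀| ≤ b → (t, y) ∈ R := by
    intro t y h1 h2; rw [hR]; exact ⟨h1, h2⟩
  have hLip' : ∀ t y z, |t - t₀| ≤ a → |y - x₀| ≤ b → |z - x₀| ≤ b →
      |f t y - f t z| ≤ L * |y - z| := fun t y z h1 h2 h3 =>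
    hLip t y z (hmemR t y h1 h2) (hmemR t z h1 h3)
  have hfM : ∀ t y, |t - t₀| ≤ a → |y - x₀| ≤ b → |f t y| ≤ M := by
    intro t y h1 h2
    exact hM.2 ⟨(t, y), hmemR t y h1 h2, rfl⟩
  have hL0 : 0 ≤ L := by
    have h1 := hLip' t₀ (x₀ + b) x₀ (by simp [abs_of_nonneg, ha.le]) (by
      rw [show x₀ + b - x₀ = b by ring, abs_of_nonneg hb.le]) (by simp [hb.le])
    have h2 : |x₀ + b - x₀| = b := by rw [show x₀ + b - x₀ = b by ring, abs_of_nonneg hb.le]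
    rw [h2] at h1
    nlinarith [abs_nonneg (f t₀ (x₀ + b) - f t₀ x₀)]
  -- the solution stays in the rectangle
  have hxb : ∀ t ∈ Set.Ioo (t₀ - A) (t₀ + A), |x t - x₀| ≤ b := by
    obtain ⟨z, hz0, hzsol, hzb⟩ := my_sol_exists hf hb hM0 hL0 hA0 hAa hMA hLip' hfM
    intro t ht
    rw [← hxuniq z hz0 hzsol t ht]
    exact hzb t ⟨ht.1.le, ht.2.le⟩
  -- regularity of the partial sums
  have hSderiv : ∀ m, (∀ t, HasDerivAt (ifoS u m) (ifoD f c₀ u m t) t) ∧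
      Continuous (ifoD f c₀ u m) := by
    intro m
    induction m with
    | zero =>
      constructor
      · intro t
        have hs : ifoS u 0 = fun _ => x₀ := funext fun s => by simp [ifoS, hu0]
        rw [hs]
        simpa [ifoD] using hasDerivAt_const t x₀
      · simpa [ifoD] using continuous_const (y := (0 : ℝ)) (X := ℝ)
    | succ m ih =>
      obtain ⟨ih1, ih2⟩ := ih
      have hScont : Continuous (ifoS u m) :=
        continuous_iff_continuousAt.2 fun s => (ih1 s).continuousAt
      have hGc : Continuous (fun ξ => ifoD f c₀ u m ξ - f ξ (ifoS u m ξ)) :=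
        ih2.sub (hf.comp (continuous_id.prodMk hScont))
      have huc : ∀ t, u (m + 1) t =
          c₀ * ∫ ξ in t₀..t, (ifoD f c₀ u m ξ - f ξ (ifoS u m ξ)) := by
        intro t
        rw [hu m t]
        congr 1
        apply intervalIntegral.integral_congr
        intro ξ _
        have hde : deriv (fun s => ∑ k ∈ Finset.range (m + 1), u k s) ξ = ifoD f c₀ u m ξ :=
          HasDerivAt.deriv (ih1 ξ)
        simp only [ifoS]
        rw [hde]
      constructor
      · intro t
        have h1 : HasDerivAt (fun s => ∫ ξ in t₀..s, (ifoD f c₀ u m ξ - f ξ (ifoS u m ξ)))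
            (ifoD f c₀ u m t - f t (ifoS u m t)) t := my_ftc hGc t₀ t
        have h2 : HasDerivAt (u (m + 1))
            (c₀ * (ifoD f c₀ u m t - f t (ifoS u m t))) t :=
          (h1.const_mul c₀).congr_of_eventuallyEq
            (Filter.Eventually.of_forall fun s => huc s)
        have hsum : ifoS u (m + 1) = fun s => ifoS u m s + u (m + 1) s :=
          funext fun s => by simp [ifoS, Finset.sum_range_succ]
        have h3 : HasDerivAt (ifoS u (m + 1))
            (ifoD f c₀ u m t + c₀ * (ifoD f c₀ u m t - f t (ifoS u m t))) t := by
          rw [hsum]; exact (ih1 t).add h2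
        simpa [ifoD] using h3
      · have hcont : Continuous (fun t =>
            ifoD f c₀ u m t + c₀ * (ifoD f c₀ u m t - f t (ifoS u m t))) :=
          ih2.add (continuous_const.mul hGc)
        simpa [ifoD] using hcont
  have hScont : ∀ m, Continuous (ifoS u m) :=
    fun m => continuous_iff_continuousAt.2 fun s => ((hSderiv m).1 s).continuousAt
  have huc : ∀ m t, u (m + 1) t =
      c₀ * ∫ ξ in t₀..t, (ifoD f c₀ u m ξ - f ξ (ifoS u m ξ)) := by
    intro m t
    rw [hu m t]
    congr 1
    apply intervalIntegral.integral_congr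
    intro ξ _
    have hde : deriv (fun s => ∑ k ∈ Finset.range (m + 1), u k s) ξ = ifoD f c₀ u m ξ :=
      HasDerivAt.deriv ((hSderiv m).1 ξ)
    simp only [ifoS]
    rw [hde]
  -- value at t₀ and FTC
  have hSt₀ : ∀ m, ifoS u m t₀ = x₀ := by
    intro m
    induction m with
    | zero => simp [ifoS, hu0]
    | succ m ih =>
      have h0 : u (m + 1) t₀ = 0 := by rw [huc m t₀, intervalIntegral.integral_same, mul_zero]
      have h1 : ifoS u (m + 1) t₀ = ifoS u m t₀ + u (m + 1) t₀ := by
        simp [ifoS, Finset.sum_range_succ]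
      rw [h1, ih, h0, add_zero]
  have hFTC : ∀ m t, ifoS u m t - x₀ = ∫ ξ in t₀..t, ifoD f c₀ u m ξ := by
    intro m t
    have h := intervalIntegral.integral_eq_sub_of_hasDerivAt
      (f := ifoS u m) (f' := ifoD f c₀ u m) (a := t₀) (b := t)
      (fun ξ _ => (hSderiv m).1 ξ) (((hSderiv m).2).intervalIntegrable t₀ t)
    rw [h, hSt₀ m]
  -- uniform bound on the derivatives of the partial sums
  have hSM_of : ∀ m, (∀ s, |s - t₀| ≤ A → |ifoD f c₀ u m s| ≤ M) →
      ∀ t, |t - t₀| ≤ A → |ifoS u m t - x₀| ≤ M * |t - t₀| := by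
    intro m hDm t ht
    rw [hFTC m t]
    have := intervalIntegral.norm_integral_le_of_norm_le_const (C := M)
      (f := ifoD f c₀ u m) (a := t₀) (b := t) ?_
    · simpa [Real.norm_eq_abs, abs_sub_comm t t₀] using this
    · intro ξ hξ
      exact hDm ξ ((my_uIoc_abs hξ).trans ht)
  have hDb : ∀ m, ∀ t, |t - t₀| ≤ A → |ifoD f c₀ u m t| ≤ M := by
    intro m
    induction m with
    | zero => intro t ht; simp [ifoD]; exact hM0.le
    | succ m ih =>
      intro t ht
      have hSb : |ifoS u m t - x₀| ≤ b := by
        have h1 := hSM_of m ih t ht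
        nlinarith [abs_nonneg (t - t₀)]
      have hfb : |f t (ifoS u m t)| ≤ M := hfM t _ (ht.trans hAa) hSb
      have hid : ifoD f c₀ u (m + 1) t =
          (1 + c₀) * ifoD f c₀ u m t - c₀ * f t (ifoS u m t) := by
        simp [ifoD]; ring
      rw [hid]
      have h2 := ih t ht
      have habs : |(1 + c₀) * ifoD f c₀ u m t - c₀ * f t (ifoS u m t)| ≤
          (1 + c₀) * |ifoD f c₀ u m t| + (-c₀) * |f t (ifoS u m t)| := by
        have h3 := abs_add_le ((1 + c₀) * ifoD f c₀ u m t) (-(c₀ * f t (ifoS u m t)))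
        rw [← sub_eq_add_neg, abs_neg, abs_mul, abs_mul, abs_of_nonneg (by linarith : (0:ℝ) ≤ 1 + c₀),
          abs_of_neg hc₂] at h3
        linarith
      nlinarith [abs_nonneg (ifoD f c₀ u m t), abs_nonneg (f t (ifoS u m t))]
  have hSb : ∀ m t, |t - t₀| ≤ A → |ifoS u m t - x₀| ≤ b := by
    intro m t ht
    have h1 := hSM_of m (hDb m) t ht
    nlinarith [abs_nonneg (t - t₀)]
  -- key constants
  set q : ℝ := 1 + c₀ / 2 with hq
  have hq0 : 0 ≤ q := by rw [hq]; linarith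
  have hq1 : q < 1 := by rw [hq]; linarith
  set Kw : ℝ := (2 * L + 2) / (-c₀) with hKw
  have hKw0 : 0 < Kw := by rw [hKw]; apply div_pos (by linarith) (by linarith)
  have hkey : (1 + c₀) + L * (-c₀) / Kw ≤ q := by
    have h1 : L * (-c₀) / Kw = L * (-c₀) * (-c₀) / (2 * L + 2) := by
      rw [hKw]; field_simp
    have h2 : L * (-c₀) * (-c₀) / (2 * L + 2) ≤ -c₀ / 2 := by
      rw [div_le_div_iff₀ (by linarith : (0:ℝ) < 2 * L + 2) (by norm_num : (0:ℝ) < 2)]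
      nlinarith [mul_nonneg (mul_nonneg hL0 (by linarith : (0:ℝ) ≤ -c₀))
        (by linarith : (0:ℝ) ≤ 1 + c₀)]
    rw [h1, hq]
    linarith
  -- main residual estimate
  have hgb : ∀ m, ∀ t, |t - t₀| ≤ A →
      |ifoD f c₀ u m t - f t (ifoS u m t)| ≤ M * q ^ m * Real.exp (Kw * |t - t₀|) := by
    intro m
    induction m with
    | zero =>
      intro t ht
      have hs0 : ifoS u 0 t = x₀ := by simp [ifoS, hu0]
      have h1 : |ifoD f c₀ u 0 t - f t (ifoS u 0 t)| = |f t x₀| := by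
        simp [ifoD, hs0]
      rw [h1]
      have h2 : |f t x₀| ≤ M := hfM t x₀ (ht.trans hAa) (by simp [hb.le])
      have h3 : 1 ≤ Real.exp (Kw * |t - t₀|) :=
        Real.one_le_exp (by positivity)
      nlinarith
    | succ m ih =>
      intro t ht
      have hGc : Continuous (fun ξ => ifoD f c₀ u m ξ - f ξ (ifoS u m ξ)) :=
        (hSderiv m).2.sub (hf.comp (continuous_id.prodMk (hScont m)))
      have hint : |∫ ξ in t₀..t, (ifoD f c₀ u m ξ - f ξ (ifoS u m ξ))| ≤
          M * q ^ m * Real.exp (Kw * |t - t₀|) / Kw :=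
        my_int_bound hGc hKw0 (by positivity) ht ih
      have hdiff : ifoS u (m + 1) t - ifoS u m t = u (m + 1) t := by
        simp [ifoS, Finset.sum_range_succ]
      have hΔ : |f t (ifoS u m t) - f t (ifoS u (m + 1) t)| ≤
          L * ((-c₀) * |∫ ξ in t₀..t, (ifoD f c₀ u m ξ - f ξ (ifoS u m ξ))|) := by
        have h4 : |ifoS u m t - ifoS u (m + 1) t| =
            (-c₀) * |∫ ξ in t₀..t, (ifoD f c₀ u m ξ - f ξ (ifoS u m ξ))| := by
          rw [abs_sub_comm, hdiff, huc m t, abs_mul, abs_of_neg hc₂]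
        have h5 := hLip' t (ifoS u m t) (ifoS u (m + 1) t) (ht.trans hAa)
          (hSb m t ht) (hSb (m + 1) t ht)
        rw [h4] at h5
        exact h5
      have hg1 : ifoD f c₀ u (m + 1) t - f t (ifoS u (m + 1) t) =
          (1 + c₀) * (ifoD f c₀ u m t - f t (ifoS u m t)) +
            (f t (ifoS u m t) - f t (ifoS u (m + 1) t)) := by
        simp [ifoD]; ring
      have hPE : (0:ℝ) ≤ M * q ^ m * Real.exp (Kw * |t - t₀|) := by positivity
      calc |ifoD f c₀ u (m + 1) t - f t (ifoS u (m + 1) t)|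
          = |(1 + c₀) * (ifoD f c₀ u m t - f t (ifoS u m t)) +
              (f t (ifoS u m t) - f t (ifoS u (m + 1) t))| := by rw [hg1]
        _ ≤ |(1 + c₀) * (ifoD f c₀ u m t - f t (ifoS u m t))| +
              |f t (ifoS u m t) - f t (ifoS u (m + 1) t)| := abs_add_le _ _
        _ = (1 + c₀) * |ifoD f c₀ u m t - f t (ifoS u m t)| +
              |f t (ifoS u m t) - f t (ifoS u (m + 1) t)| := by
            rw [abs_mul, abs_of_nonneg (by linarith : (0:ℝ) ≤ 1 + c₀)]
        _ ≤ (1 + c₀) * (M * q ^ m * Real.exp (Kw * |t - t₀|)) +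
              L * ((-c₀) * (M * q ^ m * Real.exp (Kw * |t - t₀|) / Kw)) := by
            refine add_le_add (mul_le_mul_of_nonneg_left (ih t ht) (by linarith)) ?_
            exact hΔ.trans (mul_le_mul_of_nonneg_left
              (mul_le_mul_of_nonneg_left hint (by linarith)) hL0)
        _ = (M * q ^ m * Real.exp (Kw * |t - t₀|)) * ((1 + c₀) + L * (-c₀) / Kw) := by
            field_simp
        _ ≤ (M * q ^ m * Real.exp (Kw * |t - t₀|)) * q :=
            mul_le_mul_of_nonneg_left hkey hPE
        _ = M * q ^ (m + 1) * Real.exp (Kw * |t - t₀|) := by ring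
  -- Gronwall estimate on the error
  set C : ℝ := M * Real.exp (Kw * A) * Real.exp ((L + 1) * A) with hC
  have hC0 : 0 ≤ C := by positivity
  have herr : ∀ m, ∀ t ∈ Set.Ioo (t₀ - A) (t₀ + A), |ifoS u m t - x t| ≤ C * q ^ m := by
    intro m t ht
    set ε : ℝ := M * q ^ m * Real.exp (Kw * A) with hε
    have hε0 : 0 ≤ ε := by positivity
    have hgε : ∀ s, |s - t₀| ≤ A →
        |ifoD f c₀ u m s - f s (ifoS u m s)| ≤ ε := by
      intro s hs
      refine (hgb m s hs).trans ?_
      rw [hε]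
      refine mul_le_mul_of_nonneg_left ?_ (by positivity)
      exact Real.exp_le_exp.2 (mul_le_mul_of_nonneg_left hs hKw0.le)
    have hIA : ∀ s ∈ Set.Ioo (t₀ - A) (t₀ + A), |s - t₀| ≤ A := by
      intro s hs
      rw [abs_sub_le_iff]
      exact ⟨by linarith [hs.2], by linarith [hs.1]⟩
    have hbnd : ∀ s ∈ Set.Ioo (t₀ - A) (t₀ + A),
        |ifoD f c₀ u m s - f s (x s)| ≤ (L + 1) * |ifoS u m s - x s| + ε := by
      intro s hs
      have h6 : ifoD f c₀ u m s - f s (x s) =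
          (ifoD f c₀ u m s - f s (ifoS u m s)) + (f s (ifoS u m s) - f s (x s)) := by ring
      have h7 : |f s (ifoS u m s) - f s (x s)| ≤ L * |ifoS u m s - x s| :=
        hLip' s _ _ ((hIA s hs).trans hAa) (hSb m s (hIA s hs)) (hxb s hs)
      calc |ifoD f c₀ u m s - f s (x s)| ≤
            |ifoD f c₀ u m s - f s (ifoS u m s)| + |f s (ifoS u m s) - f s (x s)| := by
              rw [h6]; exact abs_add_le _ _
        _ ≤ ε + L * |ifoS u m s - x s| := add_le_add (hgε s (hIA s hs)) h7
        _ ≤ (L + 1) * |ifoS u m s - x s| + ε := by nlinarith [abs_nonneg (ifoS u m s - x s)]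
    have ht₀mem : t₀ ∈ Set.Ioo (t₀ - A) (t₀ + A) := ⟨by linarith, by linarith⟩
    have hφ0 : ifoS u m t₀ - x t₀ = 0 := by rw [hSt₀ m, hx0, sub_self]
    have hgoal : |ifoS u m t - x t| ≤ ε * Real.exp ((L + 1) * A) := by
      rcases le_total t₀ t with hord | hord
      · have hsub : Set.Icc t₀ t ⊆ Set.Ioo (t₀ - A) (t₀ + A) := by
          intro s hs
          exact ⟨by linarith [hs.1], by linarith [hs.2, ht.2]⟩
        have h8 := my_gronwall (φ := fun s => ifoS u m s - x s)
          (φ' := fun s => ifoD f c₀ u m s - f s (x s)) hord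
          (fun s hs => ((hSderiv m).1 s).sub (hxsol s (hsub hs)))
          hφ0 (fun s hs => hbnd s (hsub hs))
        refine h8.trans (gronwallBound_le (by linarith) hε0 (by linarith) ?_)
        linarith [ht.2]
      · have hsub : Set.Icc t₀ (2 * t₀ - t) ⊆ Set.Ioo (t₀ - A) (t₀ + A) := by
          intro s hs
          exact ⟨by linarith [hs.1], by linarith [hs.2, ht.1]⟩
        have hord' : t₀ ≤ 2 * t₀ - t := by linarith
        have h8 := my_gronwall (φ := fun s => ifoS u m (2 * t₀ - s) - x (2 * t₀ - s))
          (φ' := fun s => -(ifoD f c₀ u m (2 * t₀ - s) - f (2 * t₀ - s) (x (2 * t₀ - s))))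
          (t := 2 * t₀ - t) (K := L + 1) (ε := ε) hord' ?_
          (by show ifoS u m (2 * t₀ - t₀) - x (2 * t₀ - t₀) = 0
              rw [show 2 * t₀ - t₀ = t₀ by ring]; exact hφ0) ?_
        · have hbeta : (fun s => ifoS u m (2 * t₀ - s) - x (2 * t₀ - s)) (2 * t₀ - t) =
              ifoS u m t - x t := by
            simp only []
            rw [show 2 * t₀ - (2 * t₀ - t) = t by ring]
          rw [show 2 * t₀ - (2 * t₀ - t) = t by ring] at h8
          refine h8.trans (gronwallBound_le (by linarith) hε0 (by linarith) ?_)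
          linarith [ht.1]
        · intro s hs
          have hmem : 2 * t₀ - s ∈ Set.Ioo (t₀ - A) (t₀ + A) :=
            ⟨by linarith [hs.2, ht.1], by linarith [hs.1]⟩
          have hinner : HasDerivAt (fun s : ℝ => 2 * t₀ - s) (-1) s := by
            simpa [Pi.sub_def] using (hasDerivAt_const s (2 * t₀)).sub (hasDerivAt_id s)
          have houter : HasDerivAt (fun r => ifoS u m r - x r)
              (ifoD f c₀ u m (2 * t₀ - s) - f (2 * t₀ - s) (x (2 * t₀ - s))) (2 * t₀ - s) :=
            ((hSderiv m).1 _).sub (hxsol _ hmem)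
          have hcomp := houter.comp s hinner
          simpa [Function.comp_def, mul_neg_one] using hcomp
        · intro s hs
          have hmem : 2 * t₀ - s ∈ Set.Ioo (t₀ - A) (t₀ + A) :=
            ⟨by linarith [hs.2, ht.1], by linarith [hs.1]⟩
          have hb2 := hbnd (2 * t₀ - s) hmem
          simpa only [abs_neg] using hb2
    refine hgoal.trans (le_of_eq ?_)
    rw [hε, hC]
    ring
  -- conclusion
  rw [Metric.tendstoUniformlyOn_iff]
  intro ε' hε'
  have htend : Filter.Tendsto (fun n : ℕ => C * q ^ n) Filter.atTop (nhds 0) := by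
    have := (tendsto_pow_atTop_nhds_zero_of_lt_one hq0 hq1).const_mul C
    simpa only [mul_zero] using this
  filter_upwards [htend.eventually (gt_mem_nhds hε')] with n hn
  intro t ht
  have h11 := herr n t ht
  rw [Real.dist_eq, abs_sub_comm]
  calc |(∑ k ∈ Finset.range (n + 1), u k t) - x t| = |ifoS u n t - x t| := by
        simp only [ifoS]
    _ ≤ C * q ^ n := h11
    _ < ε' := hn
end

section
/- Let (t₀, x₀) ∈ ℝ², a, b > 0, R = {(t,x) : |t − t₀| ≤ a, |x − x₀| ≤ b}, let f : ℝ × ℝ → ℝ be continuous and Lipschitz in the second variable on R with constant L > 0, let M = max_{R} |f| with M > 0, A = min{a, b/M}, and J = [t₀ − A, t₀ + A]. Let S = { x ∈ C(J) : |x(t) − x₀| ≤ b for all t ∈ J }, and for c₀ ∈ ℝ define the operator F on C(J) by F(x)(t) = (1 + c₀)·x(t) − c₀·( x₀ + ∫_{t₀}^{t} f(ξ, x(ξ)) dξ ). If c₀ ∈ [−1, 0], then F maps S into S, i.e. for every continuous x : J → ℝ with sup_{t∈J} |x(t) − x₀| ≤ b, one has sup_{t∈J} |F(x)(t) − x₀|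 ≤ b. -/
/-- The IFOHAM fixed-point operator
`F(x)(t) = (1 + c₀)·x(t) - c₀·(x₀ + ∫ₜ₀ᵗ f(ξ, x ξ) dξ)` maps the closed ball
`S = {x ∈ C(J) : |x(t) - x₀| ≤ b on J}` into itself whenever `c₀ ∈ [-1, 0]`. -/
theorem stmt_6 (f : ℝ → ℝ → ℝ) (hf : Continuous fun p : ℝ × ℝ => f p.1 p.2)
    (t₀ x₀ a b L M A : ℝ) (ha : 0 < a) (hb : 0 < b) (hL : 0 < L)
    (R : Set (ℝ × ℝ)) (hR : R = {p : ℝ × ℝ | |p.1 - t₀| ≤ a ∧ |p.2 - x₀| ≤ b})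
    (hLip : ∀ t y z, (t, y) ∈ R → (t, z) ∈ R → |f t y - f t z| ≤ L * |y - z|)
    (hM : IsGreatest ((fun p : ℝ × ℝ => |f p.1 p.2|) '' R) M) (hM0 : 0 < M)
    (hA : A = min a (b / M))
    (c₀ : ℝ) (hc₀ : c₀ ∈ Set.Icc (-1 : ℝ) 0)
    (x : ℝ → ℝ) (hxc : ContinuousOn x (Set.Icc (t₀ - A) (t₀ + A)))
    (hxb : ∀ t ∈ Set.Icc (t₀ - A) (t₀ + A), |x t - x₀| ≤ b) :
    ∀ t ∈ Set.Icc (t₀ - A) (t₀ + A),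
      |((1 + c₀) * x t - c₀ * (x₀ + ∫ ξ in t₀..t, f ξ (x ξ))) - x₀| ≤ b := by
  intro t ht
  obtain ⟨hc₁, hc₂⟩ := hc₀
  have hA0 : 0 < A := by
    rw [hA]; exact lt_min ha (div_pos hb hM0)
  have hAa : A ≤ a := by rw [hA]; exact min_le_left _ _
  have hMA : M * A ≤ b := by
    rw [hA]
    calc M * min a (b / M) ≤ M * (b / M) := by
          exact mul_le_mul_of_nonneg_left (min_le_right _ _) hM0.le
      _ = b := by field_simp
  have ht₀ : t₀ ∈ Set.Icc (t₀ - A) (t₀ + A) := by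
    constructor <;> linarith
  have hsub : Set.uIcc t₀ t ⊆ Set.Icc (t₀ - A) (t₀ + A) :=
    Set.uIcc_subset_Icc ht₀ ht
  -- the integrand is continuous on uIcc
  have hcont : ContinuousOn (fun ξ => f ξ (x ξ)) (Set.Icc (t₀ - A) (t₀ + A)) := by
    exact hf.comp_continuousOn (continuousOn_id.prodMk hxc)
  have hInt : IntervalIntegrable (fun ξ => f ξ (x ξ)) MeasureTheory.volume t₀ t :=
    (hcont.mono hsub).intervalIntegrable
  have hbound : ∀ ξ ∈ Set.uIoc t₀ t, |f ξ (x ξ)| ≤ M := by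
    intro ξ hξ
    have hξ' : ξ ∈ Set.Icc (t₀ - A) (t₀ + A) := hsub (Set.uIoc_subset_uIcc hξ)
    apply hM.2
    refine ⟨(ξ, x ξ), ?_, rfl⟩
    rw [hR]
    constructor
    · have := hξ'.1; have := hξ'.2
      rw [abs_le]; constructor <;> linarith
    · exact hxb ξ hξ'
  have hI : |∫ ξ in t₀..t, f ξ (x ξ)| ≤ M * A := by
    have h1 : |∫ ξ in t₀..t, f ξ (x ξ)| ≤ M * |t - t₀| := by
      have := intervalIntegral.norm_integral_le_of_norm_le_const (C := M)
        (f := fun ξ => f ξ (x ξ)) (a := t₀) (b := t) hbound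
      simpa using this
    have h2 : |t - t₀| ≤ A := by
      have := ht.1; have := ht.2
      rw [abs_le]; constructor <;> linarith
    calc |∫ ξ in t₀..t, f ξ (x ξ)| ≤ M * |t - t₀| := h1
      _ ≤ M * A := mul_le_mul_of_nonneg_left h2 hM0.le
  have hx : |x t - x₀| ≤ b := hxb t ht
  have key : ((1 + c₀) * x t - c₀ * (x₀ + ∫ ξ in t₀..t, f ξ (x ξ))) - x₀
      = (1 + c₀) * (x t - x₀) - c₀ * (∫ ξ in t₀..t, f ξ (x ξ)) := by ring
  rw [key]
  calc |(1 + c₀) * (x t - x₀) - c₀ * (∫ ξ in t₀..t, f ξ (x ξ))|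
      ≤ |(1 + c₀) * (x t - x₀)| + |c₀ * (∫ ξ in t₀..t, f ξ (x ξ))| := abs_sub _ _
    _ = (1 + c₀) * |x t - x₀| + (-c₀) * |∫ ξ in t₀..t, f ξ (x ξ)| := by
        rw [abs_mul, abs_mul, abs_of_nonneg (by linarith : (0:ℝ) ≤ 1 + c₀),
          abs_of_nonpos hc₂]
    _ ≤ (1 + c₀) * b + (-c₀) * (M * A) := by
        gcongr <;> [linarith; linarith]
    _ ≤ (1 + c₀) * b + (-c₀) * b := by
        gcongr; linarith
    _ = b := by ring
end

section
/- Let t₀ ∈ ℝ, A > 0, J = [t₀ − A, t₀ + A], and let L̃ > 0. For any continuous functions x, y : J → ℝ, define ‖x − y‖_e = max_{t∈J} |(x(t) − y(t))·e^{−L̃|t − t₀|}|. Then max_{t∈J} e^{−L̃|t−t₀|} · | ∫_{t₀}^{t} |x(ξ) − y(ξ)| dξ | ≤ ( ‖x − y‖_e / L̃ ) · (1 − e^{−L̃ A} ). -/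
private lemma exp_int_base (Lt c : ℝ) (h : Lt ≠ 0) :
    ∫ u in (0:ℝ)..c, Real.exp (Lt * u) = Lt⁻¹ * (Real.exp (Lt * c) - 1) := by
  rw [intervalIntegral.integral_comp_mul_left (fun u => Real.exp u) h]
  simp [integral_exp]

private lemma exp_int_right (Lt a b : ℝ) (h : Lt ≠ 0) :
    ∫ ξ in a..b, Real.exp (Lt * (ξ - a)) = Lt⁻¹ * (Real.exp (Lt * (b - a)) - 1) := by
  have h1 := intervalIntegral.integral_comp_sub_right (a := a) (b := b)
    (fun u => Real.exp (Lt * u)) a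
  rw [h1, sub_self]
  exact exp_int_base Lt (b - a) h

private lemma exp_int_left (Lt a b : ℝ) (h : Lt ≠ 0) :
    ∫ ξ in a..b, Real.exp (Lt * (b - ξ)) = Lt⁻¹ * (Real.exp (Lt * (b - a)) - 1) := by
  have h1 := intervalIntegral.integral_comp_sub_left (a := a) (b := b)
    (fun u => Real.exp (Lt * u)) b
  rw [h1, sub_self]
  exact exp_int_base Lt (b - a) h

private lemma final_alg (Lt A s normE : ℝ) (hLt : 0 < Lt) (hE : 0 ≤ normE)
    (hs : 0 ≤ s) (hsA : s ≤ A) :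
    Real.exp (-Lt * s) * (normE * (Lt⁻¹ * (Real.exp (Lt * s) - 1)))
      ≤ (normE / Lt) * (1 - Real.exp (-Lt * A)) := by
  have h1 : Real.exp (-Lt * s) * (Real.exp (Lt * s) - 1) = 1 - Real.exp (-Lt * s) := by
    rw [mul_sub, ← Real.exp_add]; ring_nf; simp
  have h2 : Real.exp (-Lt * A) ≤ Real.exp (-Lt * s) :=
    Real.exp_le_exp.mpr (by nlinarith)
  calc Real.exp (-Lt * s) * (normE * (Lt⁻¹ * (Real.exp (Lt * s) - 1)))
      = (normE / Lt) * (1 - Real.exp (-Lt * s)) := by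
        rw [div_eq_mul_inv]; linear_combination (normE * Lt⁻¹) * h1
    _ ≤ (normE / Lt) * (1 - Real.exp (-Lt * A)) := by
        apply mul_le_mul_of_nonneg_left (by linarith) (by positivity)

/-- Bielecki-norm estimate: for continuous `x, y` on `J = [t₀ - A, t₀ + A]`,
`max_{t∈J} e^{-L̃|t-t₀|}·|∫ₜ₀ᵗ |x(ξ) - y(ξ)| dξ| ≤ (‖x - y‖ₑ / L̃)·(1 - e^{-L̃A})`,
where `‖z‖ₑ = max_{t∈J} |z(t)·e^{-L̃|t-t₀|}|`. -/
theorem stmt_7 (t₀ A Lt : ℝ) (hA : 0 < A) (hLt : 0 < Lt)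
    (x y : ℝ → ℝ)
    (hx : ContinuousOn x (Set.Icc (t₀ - A) (t₀ + A)))
    (hy : ContinuousOn y (Set.Icc (t₀ - A) (t₀ + A)))
    (normE : ℝ)
    (hnormE : IsGreatest
      ((fun t => |(x t - y t) * Real.exp (-Lt * |t - t₀|)|) ''
        Set.Icc (t₀ - A) (t₀ + A)) normE) :
    ∀ t ∈ Set.Icc (t₀ - A) (t₀ + A),
      Real.exp (-Lt * |t - t₀|) * |(∫ ξ in t₀..t, |x ξ - y ξ|)|
        ≤ (normE / Lt) * (1 - Real.exp (-Lt * A)) := by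
  obtain ⟨hmem, hub⟩ := hnormE
  have hE0 : 0 ≤ normE := by
    obtain ⟨s, hs, hv⟩ := hmem; rw [← hv]; positivity
  have hcont : ContinuousOn (fun ξ => |x ξ - y ξ|) (Set.Icc (t₀ - A) (t₀ + A)) :=
    (hx.sub hy).abs
  have key : ∀ ξ ∈ Set.Icc (t₀ - A) (t₀ + A),
      |x ξ - y ξ| ≤ normE * Real.exp (Lt * |ξ - t₀|) := by
    intro ξ hξ
    have h1 : |(x ξ - y ξ) * Real.exp (-Lt * |ξ - t₀|)| ≤ normE :=
      hub ⟨ξ, hξ, rfl⟩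
    rw [abs_mul, abs_of_pos (Real.exp_pos _)] at h1
    calc |x ξ - y ξ|
        = |x ξ - y ξ| * Real.exp (-Lt * |ξ - t₀|) * Real.exp (Lt * |ξ - t₀|) := by
          rw [mul_assoc, ← Real.exp_add]; ring_nf; simp
      _ ≤ normE * Real.exp (Lt * |ξ - t₀|) :=
          mul_le_mul_of_nonneg_right h1 (Real.exp_pos _).le
  intro t ht
  obtain ⟨ht1, ht2⟩ := ht
  rcases le_or_gt t₀ t with hc | hc
  · -- t₀ ≤ t
    have hsub : Set.Icc t₀ t ⊆ Set.Icc (t₀ - A) (t₀ + A) :=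
      Set.Icc_subset_Icc (by linarith) ht2
    have hsub' : Set.uIcc t₀ t ⊆ Set.Icc (t₀ - A) (t₀ + A) := by
      rw [Set.uIcc_of_le hc]; exact hsub
    have hint : IntervalIntegrable (fun ξ => |x ξ - y ξ|) MeasureTheory.volume t₀ t :=
      (hcont.mono hsub').intervalIntegrable
    have hint2 : IntervalIntegrable (fun ξ => normE * Real.exp (Lt * (ξ - t₀)))
        MeasureTheory.volume t₀ t := by
      apply Continuous.intervalIntegrable; continuity
    have hmono := intervalIntegral.integral_mono_on hc hint hint2 (fun ξ hξ => by
      have h := key ξ (hsub hξ)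
      rwa [abs_of_nonneg (by linarith [hξ.1] : (0:ℝ) ≤ ξ - t₀)] at h)
    rw [intervalIntegral.integral_const_mul, exp_int_right Lt t₀ t hLt.ne'] at hmono
    have habs : |(∫ ξ in t₀..t, |x ξ - y ξ|)| = ∫ ξ in t₀..t, |x ξ - y ξ| :=
      abs_of_nonneg (intervalIntegral.integral_nonneg hc (fun ξ _ => abs_nonneg _))
    rw [habs, abs_of_nonneg (by linarith : (0:ℝ) ≤ t - t₀)]
    calc Real.exp (-Lt * (t - t₀)) * ∫ ξ in t₀..t, |x ξ - y ξ|
        ≤ Real.exp (-Lt * (t - t₀)) * (normE * (Lt⁻¹ * (Real.exp (Lt * (t - t₀)) - 1))) :=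
          mul_le_mul_of_nonneg_left hmono (Real.exp_pos _).le
      _ ≤ (normE / Lt) * (1 - Real.exp (-Lt * A)) :=
          final_alg Lt A (t - t₀) normE hLt hE0 (by linarith) (by linarith)
  · -- t < t₀
    have hsub : Set.Icc t t₀ ⊆ Set.Icc (t₀ - A) (t₀ + A) :=
      Set.Icc_subset_Icc ht1 (by linarith)
    have hsub' : Set.uIcc t t₀ ⊆ Set.Icc (t₀ - A) (t₀ + A) := by
      rw [Set.uIcc_of_le hc.le]; exact hsub
    have hint : IntervalIntegrable (fun ξ => |x ξ - y ξ|) MeasureTheory.volume t t₀ :=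
      (hcont.mono hsub').intervalIntegrable
    have hint2 : IntervalIntegrable (fun ξ => normE * Real.exp (Lt * (t₀ - ξ)))
        MeasureTheory.volume t t₀ := by
      apply Continuous.intervalIntegrable; continuity
    have hmono := intervalIntegral.integral_mono_on hc.le hint hint2 (fun ξ hξ => by
      have h := key ξ (hsub hξ)
      rwa [abs_of_nonpos (by linarith [hξ.2] : ξ - t₀ ≤ 0), neg_sub] at h)
    rw [intervalIntegral.integral_const_mul, exp_int_left Lt t t₀ hLt.ne'] at hmono
    have habs : |(∫ ξ in t₀..t, |x ξ - y ξ|)| = ∫ ξ in t..t₀, |x ξ - y ξ| := by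
      rw [intervalIntegral.integral_symm t t₀, abs_neg]
      exact abs_of_nonneg (intervalIntegral.integral_nonneg hc.le (fun ξ _ => abs_nonneg _))
    rw [habs, abs_of_nonpos (by linarith : t - t₀ ≤ 0), neg_sub]
    calc Real.exp (-Lt * (t₀ - t)) * ∫ ξ in t..t₀, |x ξ - y ξ|
        ≤ Real.exp (-Lt * (t₀ - t)) * (normE * (Lt⁻¹ * (Real.exp (Lt * (t₀ - t)) - 1))) :=
          mul_le_mul_of_nonneg_left hmono (Real.exp_pos _).le
      _ ≤ (normE / Lt) * (1 - Real.exp (-Lt * A)) :=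
          final_alg Lt A (t₀ - t) normE hLt hE0 (by linarith) (by linarith)
end

section
/- Let (t₀, x₀) ∈ ℝ², a, b > 0, R = {(t,x) : |t − t₀| ≤ a, |x − x₀| ≤ b}, let f : ℝ × ℝ → ℝ be continuous and Lipschitz in the second variable on R with constant L > 0, let M = max_R |f| with M > 0, A = min{a, b/M}, J = [t₀ − A, t₀ + A], and S = { x ∈ C(J) : |x(t) − x₀| ≤ b for all t ∈ J }. Let L̃ > L, and define ‖z‖_e = max_{t∈J} |z(t)·e^{−L̃|t−t₀|}| and F(x)(t) = (1 + c₀)·x(t) − c₀·( x₀ + ∫_{t₀}^{t} f(ξ, x(ξ)) dξ ). If c₀ ∈ [−1, 0) and x, y ∈ S, then ‖F(x) − F(y)‖_e ≤ k·‖x − y‖_e, where k = 1 + (1 − (L/L̃)·(1 − e^{−L̃ A}))·c₀ and 0 < k < 1; that is, F is a contraction on S with respect to the weighted norm ‖·‖_e, with contraction constant k. -/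
open MeasureTheory

private lemma aux_int (Lt C t₀ t : ℝ) (hLt : 0 < Lt) (hC : 0 ≤ C) (g : ℝ → ℝ)
    (hg : IntervalIntegrable g volume t₀ t)
    (hbound : ∀ ξ ∈ Set.uIcc t₀ t, |g ξ| ≤ C * Real.exp (Lt * |ξ - t₀|)) :
    |∫ ξ in t₀..t, g ξ| ≤ C / Lt * (Real.exp (Lt * |t - t₀|) - 1) := by
  have hint : IntervalIntegrable (fun ξ => |g ξ|) volume t₀ t := hg.abs
  rcases le_total t₀ t with h | h
  · have habs : |t - t₀| = t - t₀ := abs_of_nonneg (by linarith)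
    have h1 : |∫ ξ in t₀..t, g ξ| ≤ ∫ ξ in t₀..t, |g ξ| := by
      simpa [Real.norm_eq_abs] using
        intervalIntegral.norm_integral_le_integral_norm (f := g) (μ := volume) h
    have h2 : (∫ ξ in t₀..t, |g ξ|) ≤ ∫ ξ in t₀..t, C * Real.exp (Lt * (ξ - t₀)) := by
      apply intervalIntegral.integral_mono_on h hint
      · exact (Continuous.continuousOn (by continuity)).intervalIntegrable
      · intro ξ hξ
        have := hbound ξ (by rw [Set.uIcc_of_le h]; exact hξ)
        rwa [show |ξ - t₀| = ξ - t₀ from abs_of_nonneg (by linarith [hξ.1])] at this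
    have h3 : (∫ ξ in t₀..t, C * Real.exp (Lt * (ξ - t₀)))
        = C / Lt * Real.exp (Lt * (t - t₀)) - C / Lt * Real.exp (Lt * (t₀ - t₀)) := by
      apply intervalIntegral.integral_eq_sub_of_hasDerivAt
      · intro ξ _
        have hd : HasDerivAt (fun ξ => Lt * (ξ - t₀)) Lt ξ := by
          simpa using ((hasDerivAt_id ξ).sub_const t₀).const_mul Lt
        have := (hd.exp).const_mul (C / Lt)
        convert this using 1
        rfl
        field_simp
      · exact (Continuous.continuousOn (by continuity)).intervalIntegrable
    rw [habs]
    have : Real.exp (Lt * (t₀ - t₀)) = 1 := by simp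
    rw [this] at h3
    calc |∫ ξ in t₀..t, g ξ| ≤ ∫ ξ in t₀..t, C * Real.exp (Lt * (ξ - t₀)) := h1.trans h2
      _ = C / Lt * (Real.exp (Lt * (t - t₀)) - 1) := by rw [h3]; ring
  · have habs : |t - t₀| = t₀ - t := by rw [abs_sub_comm]; exact abs_of_nonneg (by linarith)
    have h1 : |∫ ξ in t₀..t, g ξ| ≤ ∫ ξ in t..t₀, |g ξ| := by
      rw [intervalIntegral.integral_symm t t₀, abs_neg]
      simpa [Real.norm_eq_abs] using
        intervalIntegral.norm_integral_le_integral_norm (f := g) (μ := volume) h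
    have hint' : IntervalIntegrable (fun ξ => |g ξ|) volume t t₀ := hint.symm
    have h2 : (∫ ξ in t..t₀, |g ξ|) ≤ ∫ ξ in t..t₀, C * Real.exp (Lt * (t₀ - ξ)) := by
      apply intervalIntegral.integral_mono_on h hint'
      · exact (Continuous.continuousOn (by continuity)).intervalIntegrable
      · intro ξ hξ
        have := hbound ξ (by rw [Set.uIcc_comm, Set.uIcc_of_le h]; exact hξ)
        rwa [show |ξ - t₀| = t₀ - ξ by
          rw [abs_sub_comm]; exact abs_of_nonneg (by linarith [hξ.2])] at this
    have h3 : (∫ ξ in t..t₀, C * Real.exp (Lt * (t₀ - ξ)))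
        = (-(C / Lt) * Real.exp (Lt * (t₀ - t₀))) - (-(C / Lt) * Real.exp (Lt * (t₀ - t))) := by
      apply intervalIntegral.integral_eq_sub_of_hasDerivAt
        (f := fun ξ => -(C / Lt) * Real.exp (Lt * (t₀ - ξ)))
      · intro ξ _
        have hd : HasDerivAt (fun ξ => Lt * (t₀ - ξ)) (-Lt) ξ := by
          simpa using ((hasDerivAt_id ξ).const_sub t₀).const_mul Lt
        have := (hd.exp).const_mul (-(C / Lt))
        convert this using 1
        rfl
        field_simp
      · exact (Continuous.continuousOn (by continuity)).intervalIntegrable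
    rw [habs]
    have he : Real.exp (Lt * (t₀ - t₀)) = 1 := by simp
    rw [he] at h3
    calc |∫ ξ in t₀..t, g ξ| ≤ ∫ ξ in t..t₀, C * Real.exp (Lt * (t₀ - ξ)) := h1.trans h2
      _ = C / Lt * (Real.exp (Lt * (t₀ - t)) - 1) := by rw [h3]; ring

/-- Proposition 5 (part 2): for `c₀ ∈ [-1, 0)` the IFOHAM fixed-point operator
`F(x)(t) = (1 + c₀)·x(t) - c₀·(x₀ + ∫ₜ₀ᵗ f(ξ, x ξ) dξ)` is a contraction on
`S = {x ∈ C(J) : |x(t) - x₀| ≤ b}` in the weighted norm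
`‖z‖ₑ = max_{t∈J} |z(t)·e^{-L̃|t-t₀|}|`, with contraction constant
`k = 1 + (1 - (L/L̃)(1 - e^{-L̃A}))·c₀ ∈ (0, 1)`. -/
theorem stmt_9 (f : ℝ → ℝ → ℝ) (hf : Continuous fun p : ℝ × ℝ => f p.1 p.2)
    (t₀ x₀ a b L Lt M A : ℝ) (ha : 0 < a) (hb : 0 < b) (hL : 0 < L)
    (R : Set (ℝ × ℝ)) (hR : R = {p : ℝ × ℝ | |p.1 - t₀| ≤ a ∧ |p.2 - x₀| ≤ b})
    (hLip : ∀ t y z, (t, y) ∈ R → (t, z) ∈ R → |f t y - f t z| ≤ L * |y - z|)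
    (hM : IsGreatest ((fun p : ℝ × ℝ => |f p.1 p.2|) '' R) M) (hM0 : 0 < M)
    (hA : A = min a (b / M)) (hLt : L < Lt)
    (c₀ : ℝ) (hc₀ : c₀ ∈ Set.Ico (-1 : ℝ) 0)
    (x y : ℝ → ℝ)
    (hxc : ContinuousOn x (Set.Icc (t₀ - A) (t₀ + A)))
    (hxb : ∀ t ∈ Set.Icc (t₀ - A) (t₀ + A), |x t - x₀| ≤ b)
    (hyc : ContinuousOn y (Set.Icc (t₀ - A) (t₀ + A)))
    (hyb : ∀ t ∈ Set.Icc (t₀ - A) (t₀ + A), |y t - x₀| ≤ b)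
    (k : ℝ) (hk : k = 1 + (1 - (L / Lt) * (1 - Real.exp (-Lt * A))) * c₀)
    (normFE normE : ℝ)
    (hnormFE : IsGreatest
      ((fun t =>
        |(((1 + c₀) * x t - c₀ * (x₀ + ∫ ξ in t₀..t, f ξ (x ξ)))
            - ((1 + c₀) * y t - c₀ * (x₀ + ∫ ξ in t₀..t, f ξ (y ξ))))
          * Real.exp (-Lt * |t - t₀|)|) '' Set.Icc (t₀ - A) (t₀ + A)) normFE)
    (hnormE : IsGreatest
      ((fun t => |(x t - y t) * Real.exp (-Lt * |t - t₀|)|) ''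
        Set.Icc (t₀ - A) (t₀ + A)) normE) :
    (0 < k ∧ k < 1) ∧ normFE ≤ k * normE := by
  obtain ⟨hc1, hc2⟩ := hc₀
  have hA0 : 0 < A := hA ▸ lt_min ha (div_pos hb hM0)
  have hLt0 : 0 < Lt := hL.trans hLt
  have hAa : A ≤ a := hA ▸ min_le_left _ _
  -- contraction constant bounds
  set q : ℝ := L / Lt * (1 - Real.exp (-Lt * A)) with hqdef
  have hexpA : Real.exp (-Lt * A) < 1 := Real.exp_lt_one_iff.2 (by nlinarith)
  have hexpA0 : 0 < Real.exp (-Lt * A) := Real.exp_pos _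
  have hq0 : 0 < q := mul_pos (div_pos hL hLt0) (by linarith)
  have hq1 : q < 1 := by
    have h1 : L / Lt < 1 := (div_lt_one hLt0).2 hLt
    have h1' : 0 < L / Lt := div_pos hL hLt0
    nlinarith
  have hkq : k = 1 + (1 - q) * c₀ := by rw [hk, hqdef]
  have hk0 : 0 < k := by nlinarith
  have hk1 : k < 1 := by nlinarith
  refine ⟨⟨hk0, hk1⟩, ?_⟩
  -- setup
  set J : Set ℝ := Set.Icc (t₀ - A) (t₀ + A) with hJ
  have ht₀J : t₀ ∈ J := ⟨by linarith, by linarith⟩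
  have hmemR : ∀ (z : ℝ → ℝ), (∀ s ∈ J, |z s - x₀| ≤ b) →
      ∀ ξ ∈ J, (ξ, z ξ) ∈ R := by
    intro z hz ξ hξ
    rw [hR]
    refine ⟨?_, hz ξ hξ⟩
    have : |ξ - t₀| ≤ A := abs_le.2 ⟨by linarith [hξ.1], by linarith [hξ.2]⟩
    linarith
  have hnE0 : 0 ≤ normE := by
    obtain ⟨s, _, hv⟩ := hnormE.1
    rw [← hv]; exact abs_nonneg _
  have hEb : ∀ s ∈ J, |x s - y s| ≤ normE * Real.exp (Lt * |s - t₀|) := by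
    intro s hs
    have h : |(x s - y s) * Real.exp (-Lt * |s - t₀|)| ≤ normE := hnormE.2 ⟨s, hs, rfl⟩
    rw [abs_mul, abs_of_pos (Real.exp_pos _)] at h
    have key : Real.exp (-Lt * |s - t₀|) * Real.exp (Lt * |s - t₀|) = 1 := by
      rw [← Real.exp_add]; ring_nf; exact Real.exp_zero
    nlinarith [mul_le_mul_of_nonneg_right h (Real.exp_pos (Lt * |s - t₀|)).le,
      abs_nonneg (x s - y s), Real.exp_pos (Lt * |s - t₀|)]
  have hgx : ContinuousOn (fun ξ => f ξ (x ξ)) J :=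
    hf.comp_continuousOn (f := fun ξ => (ξ, x ξ)) (continuousOn_id.prodMk hxc)
  have hgy : ContinuousOn (fun ξ => f ξ (y ξ)) J :=
    hf.comp_continuousOn (f := fun ξ => (ξ, y ξ)) (continuousOn_id.prodMk hyc)
  -- main estimate
  obtain ⟨t, ht, hv⟩ := hnormFE.1
  rw [← hv]
  have hsub : Set.uIcc t₀ t ⊆ J := Set.uIcc_subset_Icc ht₀J ht
  have hix : IntervalIntegrable (fun ξ => f ξ (x ξ)) volume t₀ t :=
    (hgx.mono hsub).intervalIntegrable
  have hiy : IntervalIntegrable (fun ξ => f ξ (y ξ)) volume t₀ t :=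
    (hgy.mono hsub).intervalIntegrable
  have hig : IntervalIntegrable (fun ξ => f ξ (x ξ) - f ξ (y ξ)) volume t₀ t := hix.sub hiy
  have heq : (((1 + c₀) * x t - c₀ * (x₀ + ∫ ξ in t₀..t, f ξ (x ξ)))
      - ((1 + c₀) * y t - c₀ * (x₀ + ∫ ξ in t₀..t, f ξ (y ξ))))
      = (1 + c₀) * (x t - y t) - c₀ * ∫ ξ in t₀..t, f ξ (x ξ) - f ξ (y ξ) := by
    rw [intervalIntegral.integral_sub hix hiy]; ring
  have hbound : ∀ ξ ∈ Set.uIcc t₀ t,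
      |f ξ (x ξ) - f ξ (y ξ)| ≤ L * normE * Real.exp (Lt * |ξ - t₀|) := by
    intro ξ hξ
    have hξJ : ξ ∈ J := hsub hξ
    have h1 := hLip ξ (x ξ) (y ξ) (hmemR x hxb ξ hξJ) (hmemR y hyb ξ hξJ)
    have h2 := hEb ξ hξJ
    calc |f ξ (x ξ) - f ξ (y ξ)| ≤ L * |x ξ - y ξ| := h1
      _ ≤ L * (normE * Real.exp (Lt * |ξ - t₀|)) :=
        mul_le_mul_of_nonneg_left h2 hL.le
      _ = L * normE * Real.exp (Lt * |ξ - t₀|) := by ring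
  have hI : |∫ ξ in t₀..t, f ξ (x ξ) - f ξ (y ξ)|
      ≤ L * normE / Lt * (Real.exp (Lt * |t - t₀|) - 1) :=
    aux_int Lt (L * normE) t₀ t hLt0 (mul_nonneg hL.le hnE0) _ hig hbound
  -- final combination
  set E : ℝ := Real.exp (-Lt * |t - t₀|) with hE
  set Ep : ℝ := Real.exp (Lt * |t - t₀|) with hEp
  have hE0 : 0 < E := Real.exp_pos _
  have hEp0 : 0 < Ep := Real.exp_pos _
  have hEEp : E * Ep = 1 := by rw [hE, hEp, ← Real.exp_add]; ring_nf; exact Real.exp_zero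
  have htA : |t - t₀| ≤ A := abs_le.2 ⟨by linarith [ht.1], by linarith [ht.2]⟩
  have hEA : Real.exp (-Lt * A) ≤ E := Real.exp_le_exp.2 (by nlinarith)
  have hxyE : |x t - y t| * E ≤ normE := by
    have h : |(x t - y t) * Real.exp (-Lt * |t - t₀|)| ≤ normE := hnormE.2 ⟨t, ht, rfl⟩
    rwa [abs_mul, abs_of_pos hE0] at h
  set I : ℝ := ∫ ξ in t₀..t, f ξ (x ξ) - f ξ (y ξ) with hIdef
  beta_reduce
  rw [heq, abs_mul, abs_of_pos hE0]
  have hD : |(1 + c₀) * (x t - y t) - c₀ * I|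
      ≤ (1 + c₀) * |x t - y t| + (-c₀) * |I| := by
    calc |(1 + c₀) * (x t - y t) - c₀ * I| ≤ |(1 + c₀) * (x t - y t)| + |c₀ * I| :=
        abs_sub _ _
      _ = (1 + c₀) * |x t - y t| + (-c₀) * |I| := by
        rw [abs_mul, abs_mul, abs_of_nonneg (by linarith : (0:ℝ) ≤ 1 + c₀),
          abs_of_neg hc2]
  have step1 : |(1 + c₀) * (x t - y t) - c₀ * I| * E
      ≤ (1 + c₀) * (|x t - y t| * E) + (-c₀) * (|I| * E) := by
    have := mul_le_mul_of_nonneg_right hD hE0.le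
    calc |(1 + c₀) * (x t - y t) - c₀ * I| * E
        ≤ ((1 + c₀) * |x t - y t| + (-c₀) * |I|) * E := this
      _ = (1 + c₀) * (|x t - y t| * E) + (-c₀) * (|I| * E) := by ring
  have step2 : (1 + c₀) * (|x t - y t| * E) ≤ (1 + c₀) * normE :=
    mul_le_mul_of_nonneg_left hxyE (by linarith)
  have step3 : |I| * E ≤ L * normE / Lt * (1 - E) := by
    have := mul_le_mul_of_nonneg_right hI hE0.le
    calc |I| * E ≤ L * normE / Lt * (Ep - 1) * E := this
      _ = L * normE / Lt * (Ep * E - E) := by ring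
      _ = L * normE / Lt * (1 - E) := by rw [mul_comm Ep E, hEEp]
  have step4 : (-c₀) * (|I| * E) ≤ (-c₀) * (L * normE / Lt * (1 - Real.exp (-Lt * A))) := by
    apply mul_le_mul_of_nonneg_left _ (by linarith)
    calc |I| * E ≤ L * normE / Lt * (1 - E) := step3
      _ ≤ L * normE / Lt * (1 - Real.exp (-Lt * A)) := by
        apply mul_le_mul_of_nonneg_left (by linarith)
          (by positivity)
  calc |(1 + c₀) * (x t - y t) - c₀ * I| * E
      ≤ (1 + c₀) * (|x t - y t| * E) + (-c₀) * (|I| * E) := step1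
    _ ≤ (1 + c₀) * normE + (-c₀) * (L * normE / Lt * (1 - Real.exp (-Lt * A))) := by
        linarith [step2, step4]
    _ = k * normE := by
        have hne : Lt ≠ 0 := ne_of_gt hLt0
        rw [hkq, hqdef]
        field_simp
        ring
end
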